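/- arXiv:1001.0289 — 9 statements merged into one kernel-verified Lean document; each statement's English description precedes it below -/
import Mathlib

section
/- Let x ∈ X with I(x) = {i_1 < … < i_s}, let x' ∈ X and g, g' ∈ (ℤ/2)^m. Then (x, g) and (x', g') represent the same point of the glue-back construction M(X, λ) if and only if there exist ε_1, …, ε_s ∈ {0, 1} such that x' = τ_{i_s}^{ε_s}(⋯(τ_{i_1}^{ε_1}(x))⋯) and g' = g + ε_1·λ(i_1) + ⋯ + ε_s·λ(i_s). (In particular, if (x, g) ∼ (x', g') then x' is a duplicate point of x.) -/
open Set Relation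

/-- An involutive panel structure on a topological space `X` with `k` panels. -/
structure PanelStructure (X : Type*) [TopologicalSpace X] (k : ℕ) where
  P : Fin k → Set X
  isClosed : ∀ i, IsClosed (P i)
  τ : Fin k → X → X
  continuousOn : ∀ i, ContinuousOn (τ i) (P i)
  mapsTo : ∀ i, Set.MapsTo (τ i) (P i) (P i)
  invol : ∀ i, ∀ x ∈ P i, τ i (τ i x) = x
  interMapsTo : ∀ i j, Set.MapsTo (τ i) (P i ∩ P j) (P i ∩ P j)
  comm : ∀ i j, ∀ x ∈ P i ∩ P j, τ i (τ j x) = τ j (τ i x)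

/-- The additive group `(ℤ/2)^m`, with the discrete topology. -/
abbrev Z2 (m : ℕ) : Type := Fin m → ZMod 2

instance (m : ℕ) : TopologicalSpace (Z2 m) := ⊥
instance (m : ℕ) : DiscreteTopology (Z2 m) := ⟨rfl⟩

variable {X : Type*} [TopologicalSpace X] {k m : ℕ}

/-- The basic gluing relation `(x, g) ∼ (τᵢ x, g + λ i)` for `x ∈ Pᵢ`. -/
def glueRel (S : PanelStructure X k) {G : Type*} [AddGroup G] (lam : Fin k → G)
    (p q : X × G) : Prop :=
  ∃ i, p.1 ∈ S.P i ∧ q.1 = S.τ i p.1 ∧ q.2 = p.2 + lam i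

/-- The equivalence relation generated by the gluing relation. -/
def glueSetoid (S : PanelStructure X k) {G : Type*} [AddGroup G] (lam : Fin k → G) :
    Setoid (X × G) :=
  EqvGen.setoid (glueRel S lam)

/-- The glue-back construction `M(X, λ)`, as a quotient of `X × G`
(with `G` carrying its own topology, discrete in the case `G = Z2 m`). -/
abbrev GlueBack (S : PanelStructure X k) {G : Type*} [AddGroup G] (lam : Fin k → G) :
    Type _ :=
  Quotient (glueSetoid S lam)

/-- The class `[(x, g)]` in the glue-back construction. -/
abbrev glueMk (S : PanelStructure X k) {G : Type*} [AddGroup G] (lam : Fin k → G)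
    (x : X) (g : G) : GlueBack S lam :=
  Quotient.mk (glueSetoid S lam) (x, g)

theorem eqvGen_map_of_map {α : Type*} {r : α → α → Prop} (f : α → α)
    (hf : ∀ a b, r a b → r (f a) (f b)) :
    ∀ {a b : α}, EqvGen r a b → EqvGen r (f a) (f b) := by
  intro a b h
  induction h with
  | rel a b h => exact EqvGen.rel _ _ (hf _ _ h)
  | refl a => exact EqvGen.refl _
  | symm a b _ ih => exact EqvGen.symm _ _ ih
  | trans a b c _ _ ih₁ ih₂ => exact EqvGen.trans _ _ _ ih₁ ih₂

theorem glueRel_add (S : PanelStructure X k) {G : Type*} [AddGroup G] (lam : Fin k → G)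
    (g : G) (a b : X × G) (h : glueRel S lam a b) :
    glueRel S lam (a.1, g + a.2) (b.1, g + b.2) := by
  obtain ⟨i, h₁, h₂, h₃⟩ := h
  exact ⟨i, h₁, h₂, by rw [h₃, add_assoc]⟩

/-- The natural action of `G` on the glue-back construction:
`g · [(x, g₀)] = [(x, g + g₀)]`. -/
def glueAct (S : PanelStructure X k) {G : Type*} [AddGroup G] (lam : Fin k → G) (g : G) :
    GlueBack S lam → GlueBack S lam :=
  Quotient.map (fun p => (p.1, g + p.2))
    (fun a b (hab : EqvGen (glueRel S lam) a b) =>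
      show EqvGen (glueRel S lam) _ _ from
        eqvGen_map_of_map (fun p => (p.1, g + p.2)) (glueRel_add S lam g) hab)

theorem glueAct_mk (S : PanelStructure X k) {G : Type*} [AddGroup G] (lam : Fin k → G)
    (g : G) (x : X) (g₀ : G) :
    glueAct S lam g (glueMk S lam x g₀) = glueMk S lam x (g + g₀) := rfl

theorem glueAct_zero (S : PanelStructure X k) {G : Type*} [AddGroup G] (lam : Fin k → G)
    (p : GlueBack S lam) : glueAct S lam 0 p = p := by
  induction p using Quotient.ind with
  | _ a =>
    show Quotient.mk _ (a.1, 0 + a.2) = Quotient.mk _ a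
    rw [zero_add]

theorem glueAct_add (S : PanelStructure X k) {G : Type*} [AddGroup G] (lam : Fin k → G)
    (g h : G) (p : GlueBack S lam) :
    glueAct S lam (g + h) p = glueAct S lam g (glueAct S lam h p) := by
  induction p using Quotient.ind with
  | _ a =>
    show Quotient.mk _ (a.1, (g + h) + a.2) = Quotient.mk _ (a.1, g + (h + a.2))
    rw [add_assoc]

/-- Iterated application of the involutions:
`τ_{i_s}^{ε_s} ∘ ⋯ ∘ τ_{i_1}^{ε_1}` with the indices taken in increasing order. -/
def applyPanels (S : PanelStructure X k) (ε : Fin k → Bool) (x : X) : X :=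
  (List.finRange k).foldl (fun y i => if ε i then S.τ i y else y) x


section AuxGlue

variable {X : Type*} [TopologicalSpace X] {k m : ℕ}

lemma tau_mem_iff (S : PanelStructure X k) {i j : Fin k} {x : X} (hx : x ∈ S.P i) :
    S.τ i x ∈ S.P j ↔ x ∈ S.P j := by
  constructor
  · intro h
    have h2 := S.interMapsTo i j ⟨S.mapsTo i hx, h⟩
    rw [S.invol i x hx] at h2
    exact h2.2
  · intro h
    exact (S.interMapsTo i j ⟨hx, h⟩).2

lemma foldl_mem_iff (S : PanelStructure X k) (ε : Fin k → Bool) :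
    ∀ (L : List (Fin k)) (x : X), (∀ j ∈ L, ε j = true → x ∈ S.P j) →
      ∀ l, (L.foldl (fun y i => if ε i then S.τ i y else y) x ∈ S.P l ↔ x ∈ S.P l) := by
  intro L
  induction L with
  | nil => intro x _ l; exact Iff.rfl
  | cons i T ih =>
    intro x h l
    have hT : ∀ j ∈ T, ε j = true → x ∈ S.P j := fun j hj => h j (List.mem_cons_of_mem i hj)
    simp only [List.foldl_cons]
    cases hi : ε i with
    | false =>
      simp only [hi, Bool.false_eq_true, if_false]
      exact ih x hT l
    | true =>
      have hxi : x ∈ S.P i := h i (List.mem_cons_self) hi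
      simp only [hi, if_true]
      rw [ih (S.τ i x) (fun j hj hε => (tau_mem_iff S hxi).mpr (hT j hj hε)) l]
      exact tau_mem_iff S hxi

lemma foldl_comm (S : PanelStructure X k) (ε : Fin k → Bool) :
    ∀ (L : List (Fin k)) (x : X), (∀ j ∈ L, ε j = true → x ∈ S.P j) →
      ∀ i, x ∈ S.P i →
      S.τ i (L.foldl (fun y i => if ε i then S.τ i y else y) x)
        = L.foldl (fun y i => if ε i then S.τ i y else y) (S.τ i x) := by
  intro L
  induction L with
  | nil => intro x _ i _; rfl
  | cons j T ih =>
    intro x h i hxi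
    have hT : ∀ a ∈ T, ε a = true → x ∈ S.P a := fun a ha => h a (List.mem_cons_of_mem j ha)
    simp only [List.foldl_cons]
    cases hj : ε j with
    | false =>
      simp only [hj, Bool.false_eq_true, if_false]
      exact ih x hT i hxi
    | true =>
      have hxj : x ∈ S.P j := h j (List.mem_cons_self) hj
      simp only [hj, if_true]
      rw [ih (S.τ j x) (fun a ha hε => (tau_mem_iff S hxj).mpr (hT a ha hε)) i
            ((tau_mem_iff S hxj).mpr hxi),
          S.comm i j x ⟨hxi, hxj⟩]

lemma foldl_xor (S : PanelStructure X k) (ε ε' : Fin k → Bool) :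
    ∀ (L : List (Fin k)) (x : X),
      (∀ j ∈ L, (ε j = true → x ∈ S.P j) ∧ (ε' j = true → x ∈ S.P j)) →
      L.foldl (fun y i => if ε' i then S.τ i y else y)
          (L.foldl (fun y i => if ε i then S.τ i y else y) x)
        = L.foldl (fun y i => if xor (ε i) (ε' i) then S.τ i y else y) x := by
  intro L
  induction L with
  | nil => intro x _; rfl
  | cons i T ih =>
    intro x h
    have hT : ∀ j ∈ T, (ε j = true → x ∈ S.P j) ∧ (ε' j = true → x ∈ S.P j) :=
      fun j hj => h j (List.mem_cons_of_mem i hj)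
    simp only [List.foldl_cons]
    -- memberships are preserved by a single step
    have hstep : ∀ (y : X), (∀ j, x ∈ S.P j → y ∈ S.P j) →
        ∀ j ∈ T, (ε j = true → y ∈ S.P j) ∧ (ε' j = true → y ∈ S.P j) := by
      intro y hy j hj
      exact ⟨fun hε => hy j ((hT j hj).1 hε), fun hε => hy j ((hT j hj).2 hε)⟩
    cases hi : ε i with
    | false =>
      cases hi' : ε' i with
      | false =>
        simp only [hi, hi', Bool.false_eq_true, if_false, Bool.xor_false]
        exact ih x hT
      | true =>
        have hxi : x ∈ S.P i := (h i (List.mem_cons_self)).2 hi'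
        simp only [hi, hi', Bool.false_eq_true, if_false, if_true, Bool.false_xor]
        rw [foldl_comm S ε T x (fun j hj hε => (hT j hj).1 hε) i hxi]
        exact ih (S.τ i x) (hstep _ (fun j hj => (tau_mem_iff S hxi).mpr hj))
    | true =>
      have hxi : x ∈ S.P i := (h i (List.mem_cons_self)).1 hi
      cases hi' : ε' i with
      | false =>
        simp only [hi, hi', Bool.false_eq_true, if_false, if_true, Bool.xor_false]
        exact ih (S.τ i x) (hstep _ (fun j hj => (tau_mem_iff S hxi).mpr hj))
      | true =>
        simp only [hi, hi', if_true, Bool.xor_self, Bool.false_eq_true, if_false]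
        rw [foldl_comm S ε T (S.τ i x)
              (fun j hj hε => (tau_mem_iff S hxi).mpr ((hT j hj).1 hε)) i (S.mapsTo i hxi),
            S.invol i x hxi]
        exact ih x hT

lemma foldl_id (S : PanelStructure X k) (ε : Fin k → Bool) :
    ∀ (L : List (Fin k)) (x : X), (∀ j ∈ L, ε j = false) →
      L.foldl (fun y i => if ε i then S.τ i y else y) x = x := by
  intro L
  induction L with
  | nil => intro x _; rfl
  | cons i T ih =>
    intro x h
    simp only [List.foldl_cons, h i (List.mem_cons_self), Bool.false_eq_true, if_false]
    exact ih x (fun j hj => h j (List.mem_cons_of_mem i hj))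

lemma foldl_single (S : PanelStructure X k) (i : Fin k) :
    ∀ (L : List (Fin k)), L.Nodup → i ∈ L → ∀ (x : X),
      L.foldl (fun y j => if (decide (j = i)) then S.τ j y else y) x = S.τ i x := by
  intro L
  induction L with
  | nil => intro _ h; exact absurd h List.not_mem_nil
  | cons a T ih =>
    intro hnd hi x
    simp only [List.foldl_cons]
    rcases List.mem_cons.mp hi with rfl | hiT
    · have hd : (decide (i = i) : Bool) = true := decide_eq_true rfl
      simp only [hd, if_true]
      exact foldl_id S _ T (S.τ i x)
        (fun j hj => decide_eq_false (fun (hji : j = i) => ((List.nodup_cons.mp hnd).1 (hji ▸ hj)).elim))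
    · have hai : ¬ (a = i) := fun hai => (List.nodup_cons.mp hnd).1 (hai ▸ hiT)
      have hd : (decide (a = i) : Bool) = false := decide_eq_false hai
      simp only [hd, Bool.false_eq_true, if_false]
      exact ih (List.nodup_cons.mp hnd).2 hiT x

lemma z2_add_self (v : Z2 m) : v + v = 0 := by
  funext j
  have h : v j + v j = 2 * v j := by ring
  have h2 : (2 : ZMod 2) = 0 := rfl
  rw [Pi.add_apply, Pi.zero_apply, h, h2, zero_mul]

/-- the relation we show to contain the generated equivalence -/
def dupRel (S : PanelStructure X k) (lam : Fin k → Z2 m) (p q : X × Z2 m) : Prop :=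
  ∃ ε : Fin k → Bool, (∀ i, ε i = true → p.1 ∈ S.P i) ∧
    q.1 = applyPanels S ε p.1 ∧
    q.2 = p.2 + ∑ i : Fin k, (if ε i then lam i else 0)

lemma dupRel_of_eqvGen (S : PanelStructure X k) (lam : Fin k → Z2 m) (p q : X × Z2 m)
    (h : EqvGen (glueRel S lam) p q) : dupRel S lam p q := by
  induction h with
  | rel a b hab =>
    obtain ⟨i, hmem, hb1, hb2⟩ := hab
    refine ⟨fun j => decide (j = i), ?_, ?_, ?_⟩
    · intro j hj
      rw [decide_eq_true_eq] at hj
      exact hj ▸ hmem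
    · rw [hb1]
      exact (foldl_single S i (List.finRange k) (List.nodup_finRange k)
        (List.mem_finRange i) a.1).symm
    · rw [hb2]
      congr 1
      simp [eq_comm]
  | refl a =>
    refine ⟨fun _ => false, by simp, ?_, by simp⟩
    exact (foldl_id S _ (List.finRange k) a.1 (fun _ _ => rfl)).symm
  | symm a b _ ih =>
    obtain ⟨ε, hmem, hb1, hb2⟩ := ih
    have hmemb : ∀ i, ε i = true → b.1 ∈ S.P i := by
      intro i hi
      rw [hb1]
      exact (foldl_mem_iff S ε (List.finRange k) a.1
        (fun j _ hj => hmem j hj) i).mpr (hmem i hi)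
    refine ⟨ε, hmemb, ?_, ?_⟩
    · rw [hb1]
      unfold applyPanels
      rw [foldl_xor S ε ε (List.finRange k) a.1
        (fun j _ => ⟨hmem j, hmem j⟩)]
      exact (foldl_id S _ (List.finRange k) a.1 (fun j _ => Bool.xor_self (ε j))).symm
    · rw [hb2, add_assoc, z2_add_self, add_zero]
  | trans a b c _ _ ih₁ ih₂ =>
    obtain ⟨ε, hmem, hb1, hb2⟩ := ih₁
    obtain ⟨ε', hmem', hc1, hc2⟩ := ih₂
    have hmem'a : ∀ i, ε' i = true → a.1 ∈ S.P i := by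
      intro i hi
      have := hmem' i hi
      rw [hb1] at this
      exact (foldl_mem_iff S ε (List.finRange k) a.1 (fun j _ hj => hmem j hj) i).mp this
    refine ⟨fun i => xor (ε i) (ε' i), ?_, ?_, ?_⟩
    · intro i hi
      cases hε : ε i with
      | true => exact hmem i hε
      | false =>
        simp only [hε, Bool.false_xor] at hi
        exact hmem'a i hi
    · rw [hc1, hb1]
      exact foldl_xor S ε ε' (List.finRange k) a.1
        (fun j _ => ⟨hmem j, hmem'a j⟩)
    · rw [hc2, hb2, add_assoc]
      congr 1
      rw [← Finset.sum_add_distrib]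
      apply Finset.sum_congr rfl
      intro i _
      cases hε : ε i <;> cases hε' : ε' i <;>
        simp [hε, hε', z2_add_self]

lemma eqvGen_of_chain (S : PanelStructure X k) (lam : Fin k → Z2 m) (ε : Fin k → Bool) :
    ∀ (L : List (Fin k)) (x : X) (g : Z2 m), (∀ j ∈ L, ε j = true → x ∈ S.P j) →
      EqvGen (glueRel S lam) (x, g)
        (L.foldl (fun y i => if ε i then S.τ i y else y) x,
          g + (L.map (fun j => if ε j then lam j else 0)).sum) := by
  intro L
  induction L with
  | nil =>
    intro x g _
    simp only [List.foldl_nil, List.map_nil, List.sum_nil, add_zero]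
    exact EqvGen.refl _
  | cons i T ih =>
    intro x g h
    have hT : ∀ j ∈ T, ε j = true → x ∈ S.P j := fun j hj => h j (List.mem_cons_of_mem i hj)
    simp only [List.foldl_cons, List.map_cons, List.sum_cons]
    cases hi : ε i with
    | false =>
      simp only [hi, Bool.false_eq_true, if_false, zero_add]
      exact ih x g hT
    | true =>
      have hxi : x ∈ S.P i := h i (List.mem_cons_self) hi
      simp only [hi, if_true]
      refine EqvGen.trans _ _ _ (EqvGen.rel (x, g) (S.τ i x, g + lam i) ⟨i, hxi, rfl, rfl⟩) ?_
      have := ih (S.τ i x) (g + lam i)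
        (fun j hj hε => (tau_mem_iff S hxi).mpr (hT j hj hε))
      rw [add_assoc] at this
      exact this

end AuxGlue

/-- `(x, g)` and `(x', g')` represent the same point of the glue-back
construction `M(X, λ)` if and only if there are `ε_1, …, ε_s ∈ {0, 1}` (indexed by the
panels containing `x`) with `x' = τ_{i_s}^{ε_s}(⋯(τ_{i_1}^{ε_1}(x))⋯)` and
`g' = g + ε_1·λ(i_1) + ⋯ + ε_s·λ(i_s)`. -/
theorem glueMk_eq_glueMk_iff (S : PanelStructure X k) (lam : Fin k → Z2 m)
    (x x' : X) (g g' : Z2 m) :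
    glueMk S lam x g = glueMk S lam x' g' ↔
      ∃ ε : Fin k → Bool, (∀ i, ε i = true → x ∈ S.P i) ∧
        x' = applyPanels S ε x ∧
        g' = g + ∑ i : Fin k, (if ε i then lam i else 0) := by
  constructor
  · intro h
    have h' : EqvGen (glueRel S lam) (x, g) (x', g') := Quotient.exact h
    exact dupRel_of_eqvGen S lam (x, g) (x', g') h'
  · rintro ⟨ε, hmem, rfl, rfl⟩
    have := eqvGen_of_chain S lam ε (List.finRange k) x g (fun j _ hj => hmem j hj)
    apply Quotient.sound
    have hsum : (∑ i : Fin k, (if ε i then lam i else 0))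
        = ((List.finRange k).map (fun j => if ε j then lam j else 0)).sum := by
      rw [Fin.sum_univ_def]
    rw [hsum]
    exact this
end

section
/- The formula g · [(x, g₀)] = [(x, g + g₀)] (for x ∈ X and g, g₀ ∈ (ℤ/2)^m) is well defined, i.e. independent of the chosen representative (x, g₀), and determines a continuous action of the group (ℤ/2)^m on the glue-back construction M(X, λ) by homeomorphisms. -/
open Set Relation

variable {X : Type*} [TopologicalSpace X] {k m : ℕ}

/-- The formula `g · [(x, g₀)] = [(x, g + g₀)]` is well defined
(independent of the representative) and determines a continuous action of `(ℤ/2)^m`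
on the glue-back construction `M(X, λ)` by homeomorphisms. -/
theorem glueBack_action_wellDefined (S : PanelStructure X k) (lam : Fin k → Z2 m) :
    ∃ A : Z2 m → GlueBack S lam → GlueBack S lam,
      (∀ (g g₀ : Z2 m) (x : X), A g (glueMk S lam x g₀) = glueMk S lam x (g + g₀)) ∧
      (∀ p : GlueBack S lam, A 0 p = p) ∧
      (∀ (g h : Z2 m) (p : GlueBack S lam), A (g + h) p = A g (A h p)) ∧
      (∀ g : Z2 m, Continuous (A g)) ∧
      (∀ g : Z2 m, IsHomeomorph (A g)) := by
  refine ⟨glueAct S lam, fun g g₀ x => rfl, glueAct_zero S lam,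
    glueAct_add S lam, ?_, ?_⟩
  · intro g
    have hc : Continuous fun p : X × Z2 m => ((p.1, g + p.2) : X × Z2 m) :=
      continuous_fst.prodMk (continuous_const.add continuous_snd)
    exact Continuous.quotient_map' hc _
  · intro g
    have hc : ∀ g : Z2 m, Continuous (glueAct S lam g) := fun g =>
      Continuous.quotient_map' (continuous_fst.prodMk (continuous_const.add continuous_snd)) _
    exact Homeomorph.isHomeomorph
      { toFun := glueAct S lam g
        invFun := glueAct S lam (-g)
        left_inv := fun p => by
          rw [← glueAct_add, neg_add_cancel, glueAct_zero]
        right_inv := fun p => by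
          rw [← glueAct_add, add_neg_cancel, glueAct_zero]
        continuous_toFun := hc g
        continuous_invFun := hc (-g) }
end

section
/- The map X → M(X, λ)/(ℤ/2)^m sending x to the orbit of [(x, 0)] descends to a homeomorphism from the quotient X/≈ onto the orbit space of the natural (ℤ/2)^m-action on the glue-back construction M(X, λ). -/
open Set Relation

variable {X : Type*} [TopologicalSpace X] {k m : ℕ}

/-- The relation `x ≈ τᵢ(x)` on `X`. -/
def panelRel (S : PanelStructure X k) (x y : X) : Prop :=
  ∃ i, x ∈ S.P i ∧ y = S.τ i x

/-- The quotient `X/≈` of `X` by the equivalence relation generated by `x ≈ τᵢ(x)`. -/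
abbrev PanelQuot (S : PanelStructure X k) : Type _ :=
  Quotient (EqvGen.setoid (panelRel S))

/-- The orbit equivalence relation of the natural `(ℤ/2)^m`-action on `M(X, λ)`. -/
def orbitSetoid (S : PanelStructure X k) (lam : Fin k → Z2 m) :
    Setoid (GlueBack S lam) where
  r p q := ∃ g : Z2 m, glueAct S lam g p = q
  iseqv := by
    refine ⟨fun p => ⟨0, glueAct_zero S lam p⟩, ?_, ?_⟩
    · rintro p q ⟨g, rfl⟩
      refine ⟨g, ?_⟩
      rw [← glueAct_add]
      have hg : g + g = 0 := by
        funext i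
        exact (by decide : ∀ a : ZMod 2, a + a = 0) (g i)
      rw [hg, glueAct_zero]
    · rintro p q r ⟨g, rfl⟩ ⟨h, rfl⟩
      exact ⟨h + g, by rw [glueAct_add]⟩

/-- The orbit space `M(X, λ)/(ℤ/2)^m` of the natural action, with the quotient topology. -/
abbrev GlueBackOrbitSpace (S : PanelStructure X k) (lam : Fin k → Z2 m) : Type _ :=
  Quotient (orbitSetoid S lam)

/-- The map `x ↦` (orbit of `[(x, 0)]`) descends to a homeomorphism from
`X/≈` onto the orbit space of the natural `(ℤ/2)^m`-action on `M(X, λ)`. -/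
theorem panelQuot_homeomorph_orbitSpace (S : PanelStructure X k) (lam : Fin k → Z2 m) :
    ∃ h : PanelQuot S ≃ₜ GlueBackOrbitSpace S lam,
      ∀ x : X, h (Quotient.mk (EqvGen.setoid (panelRel S)) x) =
        Quotient.mk (orbitSetoid S lam) (glueMk S lam x 0) := by
  -- forward map
  have hto : ∀ a b : X, EqvGen (panelRel S) a b →
      (Quotient.mk (orbitSetoid S lam) (glueMk S lam a 0) =
       Quotient.mk (orbitSetoid S lam) (glueMk S lam b 0)) := by
    intro a b h
    induction h with
    | rel a b h =>
      obtain ⟨i, hx, rfl⟩ := h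
      refine Quotient.sound ⟨lam i, ?_⟩
      rw [glueAct_mk]
      refine Quotient.sound (EqvGen.rel _ _ ⟨i, hx, rfl, ?_⟩)
      show (0 : Z2 m) = (lam i + 0) + lam i
      rw [add_zero]
      funext j
      exact ((by decide : ∀ a : ZMod 2, a + a = 0) (lam i j)).symm
    | refl a => rfl
    | symm a b _ ih => exact ih.symm
    | trans a b c _ _ ih₁ ih₂ => exact ih₁.trans ih₂
  let φ : PanelQuot S → GlueBackOrbitSpace S lam :=
    Quotient.lift (fun x => Quotient.mk (orbitSetoid S lam) (glueMk S lam x 0))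
      (fun a b h => hto a b (Quotient.exact' (Quotient.sound h)) )
  -- backward map on GlueBack
  have hback : ∀ a b : X × Z2 m, EqvGen (glueRel S lam) a b →
      (Quotient.mk (EqvGen.setoid (panelRel S)) a.1 =
       Quotient.mk (EqvGen.setoid (panelRel S)) b.1) := by
    intro a b h
    induction h with
    | rel a b h =>
      obtain ⟨i, hx, h2, _⟩ := h
      exact Quotient.sound (EqvGen.rel _ _ ⟨i, hx, h2⟩)
    | refl a => rfl
    | symm a b _ ih => exact ih.symm
    | trans a b c _ _ ih₁ ih₂ => exact ih₁.trans ih₂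
  let ψ₀ : GlueBack S lam → PanelQuot S :=
    Quotient.lift (fun p : X × Z2 m => Quotient.mk (EqvGen.setoid (panelRel S)) p.1)
      (fun a b h => hback a b h)
  have hψ₀ : ∀ (g : Z2 m) (p : GlueBack S lam), ψ₀ (glueAct S lam g p) = ψ₀ p := by
    intro g p
    induction p using Quotient.ind with
    | _ a => rfl
  let ψ : GlueBackOrbitSpace S lam → PanelQuot S :=
    Quotient.lift ψ₀ (by rintro p q ⟨g, rfl⟩; exact (hψ₀ g p).symm)
  have left : ∀ x : PanelQuot S, ψ (φ x) = x := by
    intro x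
    induction x using Quotient.ind with
    | _ a => rfl
  have right : ∀ y : GlueBackOrbitSpace S lam, φ (ψ y) = y := by
    intro y
    induction y using Quotient.ind with
    | _ p =>
      induction p using Quotient.ind with
      | _ a =>
        refine Quotient.sound ⟨a.2, ?_⟩
        rw [glueAct_mk, add_zero]
  refine ⟨⟨⟨φ, ψ, left, right⟩, ?_, ?_⟩, fun x => rfl⟩
  · exact Continuous.quotient_lift
      (Continuous.comp continuous_quotient_mk'
        (Continuous.comp continuous_quotient_mk'
          (Continuous.prodMk_left (0 : Z2 m)))) _
  · exact Continuous.quotient_lift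
      (Continuous.quotient_lift (Continuous.comp continuous_quotient_mk' continuous_fst) _) _
end

section
/- Suppose X is nonempty and connected and every panel P_i is nonempty. Then the glue-back construction M(X, λ) has exactly 2^{m − rank(λ)} connected components. -/
open Set Relation

variable {X : Type*} [TopologicalSpace X] {k m : ℕ}

theorem glueMk_continuous (S : PanelStructure X k) {G : Type*} [AddGroup G]
    [TopologicalSpace G] (lam : Fin k → G) (g : G) :
    Continuous fun x : X => glueMk S lam x g :=
  continuous_quotient_mk'.comp (continuous_id.prodMk continuous_const)

/-- If `X` is nonempty and connected and every panel is nonempty, then the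
glue-back construction `M(X, λ)` has exactly `2^(m − rank λ)` connected components, where
`rank λ` is the `𝔽₂`-dimension of the subgroup `L_λ ≤ (ℤ/2)^m` generated by the colors
`λ(1), …, λ(k)`. -/
theorem glueBack_card_connectedComponents (S : PanelStructure X k) [ConnectedSpace X]
    (hP : ∀ i, (S.P i).Nonempty) (lam : Fin k → Z2 m) :
    Nat.card (ConnectedComponents (GlueBack S lam)) =
      2 ^ (m - Module.finrank (ZMod 2) (Submodule.span (ZMod 2) (Set.range lam))) := by
  classical
  set L : Submodule (ZMod 2) (Z2 m) := Submodule.span (ZMod 2) (Set.range lam) with hL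
  obtain ⟨x₀⟩ := (inferInstance : Nonempty X)
  -- the "same component" map
  set cmk : Z2 m → ConnectedComponents (GlueBack S lam) :=
    fun g => ConnectedComponents.mk (glueMk S lam x₀ g) with hcmk
  -- Lemma A : same g, any base points: same component
  have lemA : ∀ (x y : X) (g : Z2 m),
      (ConnectedComponents.mk (glueMk S lam x g) : ConnectedComponents (GlueBack S lam)) =
        ConnectedComponents.mk (glueMk S lam y g) := by
    intro x y g
    apply ConnectedComponents.coe_eq_coe.2
    have hconn : IsPreconnected ((fun x : X => glueMk S lam x g) '' Set.univ) :=
      (isPreconnected_univ).image _ ((glueMk_continuous S lam g).continuousOn)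
    have hx : glueMk S lam x g ∈ (fun x : X => glueMk S lam x g) '' Set.univ :=
      ⟨x, trivial, rfl⟩
    have hy : glueMk S lam y g ∈ (fun x : X => glueMk S lam x g) '' Set.univ :=
      ⟨y, trivial, rfl⟩
    have h1 := hconn.subset_connectedComponent hx
    exact connectedComponent_eq (h1 hy)
  -- Lemma B : translating by a generator keeps the component
  have lemB : ∀ (i : Fin k) (g : Z2 m), cmk g = cmk (g + lam i) := by
    intro i g
    obtain ⟨x, hx⟩ := hP i
    have hq : glueMk S lam x g = glueMk S lam (S.τ i x) (g + lam i) :=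
      Quotient.sound (EqvGen.rel _ _ ⟨i, hx, rfl, rfl⟩)
    calc cmk g = ConnectedComponents.mk (glueMk S lam x g) := lemA x₀ x g
      _ = ConnectedComponents.mk (glueMk S lam (S.τ i x) (g + lam i)) := by rw [hq]
      _ = cmk (g + lam i) := lemA (S.τ i x) x₀ (g + lam i)
  -- Lemma C : translating by any element of L keeps the component
  have lemC : ∀ v ∈ L, ∀ g : Z2 m, cmk g = cmk (g + v) := by
    intro v hv
    induction hv using Submodule.span_induction with
    | mem w hw =>
      obtain ⟨i, rfl⟩ := hw
      exact lemB i
    | zero => intro g; rw [add_zero]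
    | add v w _ _ hv hw =>
      intro g
      rw [← add_assoc]
      exact (hv g).trans (hw (g + v))
    | smul c v _ hv =>
      rcases (by decide : ∀ c : ZMod 2, c = 0 ∨ c = 1) c with rfl | rfl
      · intro g; rw [zero_smul, add_zero]
      · intro g; rw [one_smul]; exact hv g
  -- the invariant map GlueBack → Z2 m ⧸ L
  have hresp : ∀ a b : X × Z2 m, (glueSetoid S lam) a b →
      (Submodule.Quotient.mk a.2 : Z2 m ⧸ L) = Submodule.Quotient.mk b.2 := by
    intro a b hab
    induction hab with
    | rel a b h =>
      obtain ⟨i, _, _, h3⟩ := h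
      rw [h3]
      rw [Submodule.Quotient.eq]
      have : lam i ∈ L := Submodule.subset_span (Set.mem_range_self i)
      simpa using neg_mem this
    | refl a => rfl
    | symm a b _ ih => exact ih.symm
    | trans a b c _ _ ih1 ih2 => exact ih1.trans ih2
  set F : GlueBack S lam → Z2 m ⧸ L := Quotient.lift _ hresp with hF
  -- fibers of F are clopen
  have hclopen : ∀ c : Z2 m ⧸ L, IsClopen (F ⁻¹' {c}) := by
    intro c
    have key : ∀ s : Set (Z2 m ⧸ L), IsOpen (F ⁻¹' s) := by
      intro s
      rw [← (@isQuotientMap_quotient_mk' (X × Z2 m) _ (glueSetoid S lam)).isOpen_preimage]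
      show IsOpen (Prod.snd ⁻¹' ((fun g : Z2 m => (Submodule.Quotient.mk g : Z2 m ⧸ L)) ⁻¹' s))
      exact (isOpen_discrete _).preimage continuous_snd
    constructor
    · rw [← isOpen_compl_iff, ← Set.preimage_compl]
      exact key _
    · exact key _
  -- F is constant on connected components
  have hFconst : ∀ p q : GlueBack S lam,
      ConnectedComponents.mk p = ConnectedComponents.mk q → F p = F q := by
    intro p q hpq
    have h := (ConnectedComponents.coe_eq_coe.1 hpq)
    have hq : q ∈ connectedComponent p := h ▸ mem_connectedComponent
    have := (hclopen (F p)).connectedComponent_subset (show p ∈ F ⁻¹' {F p} from rfl) hq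
    exact (this : F q = F p).symm
  -- the bijection  Z2 m ⧸ L ≃ ConnectedComponents
  have hwd : ∀ v w : Z2 m, (Submodule.quotientRel L) v w → cmk v = cmk w := by
    intro v w hvw
    rw [Submodule.quotientRel_def] at hvw
    have h := lemC (v - w) hvw w
    rw [add_sub_cancel] at h
    exact h.symm
  set Φ : (Z2 m ⧸ L) → ConnectedComponents (GlueBack S lam) :=
    Quotient.lift cmk hwd with hΦ
  have hbij : Function.Bijective Φ := by
    constructor
    · intro a b hab
      induction a using Quotient.ind with
      | _ v =>
      induction b using Quotient.ind with
      | _ w =>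
      have : cmk v = cmk w := hab
      have h2 : F (glueMk S lam x₀ v) = F (glueMk S lam x₀ w) := hFconst _ _ this
      exact h2
    · intro c
      induction c using ConnectedComponents.surjective_coe.forall.2 with
      | _ p => ?_
      induction p using Quotient.ind with
      | _ a =>
      refine ⟨Submodule.Quotient.mk a.2, ?_⟩
      show cmk a.2 = _
      exact lemA x₀ a.1 a.2
  have hcard : Nat.card (ConnectedComponents (GlueBack S lam)) = Nat.card (Z2 m ⧸ L) :=
    (Nat.card_eq_of_bijective Φ hbij).symm
  rw [hcard]
  -- now compute the cardinality of the quotient module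
  have : Fintype (Z2 m ⧸ L) := Fintype.ofFinite _
  rw [Nat.card_eq_fintype_card,
    Module.card_eq_pow_finrank (K := ZMod 2) (V := Z2 m ⧸ L), ZMod.card]
  congr 1
  have h1 := Submodule.finrank_quotient_add_finrank L
  have h2 : Module.finrank (ZMod 2) (Z2 m) = m := by
    simp [Module.finrank_fin_fun]
  omega
end

section
/- Suppose X is nonempty and connected and every panel P_i is nonempty. Then the natural (ℤ/2)^m-action on M(X, λ) permutes the connected components of M(X, λ) transitively; consequently all connected components of M(X, λ) are pairwise homeomorphic, and the connected components are precisely the sets θ_λ(X × (g + L_λ)) for g ∈ (ℤ/2)^m. -/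
open Set Relation

variable {X : Type*} [TopologicalSpace X] {k m : ℕ}

section Aux

variable (S : PanelStructure X k) (lam : Fin k → Z2 m)

/-- The subgroup (submodule) generated by the colors. -/
private abbrev Lspan : Submodule (ZMod 2) (Z2 m) := Submodule.span (ZMod 2) (Set.range lam)

/-- The coset `g + L`. -/
private def cosetSet (g : Z2 m) : Set (Z2 m) := (g + ·) '' ((Lspan lam : Submodule (ZMod 2) (Z2 m)) : Set (Z2 m))

private lemma mem_cosetSet {g h : Z2 m} : h ∈ cosetSet lam g ↔ h - g ∈ Lspan lam := by
  constructor
  · rintro ⟨l, hl, rfl⟩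
    simpa using hl
  · intro hl
    exact ⟨h - g, hl, by funext j; simp only [Pi.add_apply, Pi.sub_apply]; ring⟩

/-- The candidate component: image of `univ ×ˢ (g + L)`. -/
private def Amap (g : Z2 m) : Set (GlueBack S lam) :=
  Quotient.mk (glueSetoid S lam) ''
    (Set.univ ×ˢ ((g + ·) ''
      ((Submodule.span (ZMod 2) (Set.range lam) : Submodule (ZMod 2) (Z2 m)) : Set (Z2 m))))

private lemma Amap_eq (g : Z2 m) :
    Amap S lam g = Quotient.mk (glueSetoid S lam) '' (Set.univ ×ˢ cosetSet lam g) := rfl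

private lemma snd_diff_mem {a b : X × Z2 m} (h : EqvGen (glueRel S lam) a b) :
    b.2 - a.2 ∈ Lspan lam := by
  induction h with
  | rel a b h =>
    obtain ⟨i, _, _, h3⟩ := h
    rw [h3, add_sub_cancel_left]
    exact Submodule.subset_span ⟨i, rfl⟩
  | refl a => simpa using (Lspan lam).zero_mem
  | symm a b _ ih => simpa using (Lspan lam).neg_mem ih
  | trans a b c _ _ ih1 ih2 =>
    have := (Lspan lam).add_mem ih2 ih1
    simpa [sub_add_sub_cancel] using this

private lemma continuous_theta : Continuous (Quotient.mk (glueSetoid S lam)) :=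
  continuous_quot_mk

private lemma isQuotientMap_theta :
    Topology.IsQuotientMap (Quotient.mk (glueSetoid S lam)) :=
  isQuotientMap_quot_mk

private lemma preimage_Amap (g : Z2 m) :
    Quotient.mk (glueSetoid S lam) ⁻¹' (Amap S lam g) = Set.univ ×ˢ cosetSet lam g := by
  rw [Amap_eq]
  apply Set.Subset.antisymm
  · rintro ⟨y, h⟩ hmem
    obtain ⟨⟨x, g₀⟩, ⟨-, hg₀⟩, heq⟩ := hmem
    have hrel : EqvGen (glueRel S lam) (x, g₀) (y, h) := Quotient.exact heq
    have h1 : h - g₀ ∈ Lspan lam := snd_diff_mem S lam hrel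
    have h2 : g₀ - g ∈ Lspan lam := (mem_cosetSet lam).1 hg₀
    refine ⟨trivial, (mem_cosetSet lam).2 ?_⟩
    have := (Lspan lam).add_mem h1 h2
    simpa [sub_add_sub_cancel] using this
  · exact Set.subset_preimage_image _ _

private lemma isClopen_Amap (g : Z2 m) : IsClopen (Amap S lam g) := by
  constructor
  · rw [← (isQuotientMap_theta S lam).isClosed_preimage, preimage_Amap]
    exact (isClosed_univ.prod (isClosed_discrete _))
  · rw [← (isQuotientMap_theta S lam).isOpen_preimage, preimage_Amap]
    exact (isOpen_univ.prod (isOpen_discrete _))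

private lemma mem_component_of_same_g [ConnectedSpace X] (x y : X) (g : Z2 m) :
    glueMk S lam x g ∈ connectedComponent (glueMk S lam y g) := by
  have hc : Continuous (fun x : X => glueMk S lam x g) :=
    (continuous_theta S lam).comp (continuous_id.prodMk continuous_const)
  exact (isConnected_range hc).subset_connectedComponent ⟨y, rfl⟩ ⟨x, rfl⟩

private lemma panel_step [ConnectedSpace X] (hP : ∀ i, (S.P i).Nonempty)
    (x₀ : X) (g : Z2 m) (i : Fin k) :
    glueMk S lam x₀ (g + lam i) ∈ connectedComponent (glueMk S lam x₀ g) := by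
  obtain ⟨x, hx⟩ := hP i
  have he : glueMk S lam x g = glueMk S lam (S.τ i x) (g + lam i) :=
    Quotient.sound (EqvGen.rel _ _ ⟨i, hx, rfl, rfl⟩)
  have h1 : connectedComponent (glueMk S lam x₀ g) = connectedComponent (glueMk S lam x g) :=
    connectedComponent_eq (mem_component_of_same_g S lam x x₀ g)
  rw [h1, he]
  exact mem_component_of_same_g S lam x₀ (S.τ i x) (g + lam i)

private lemma span_step [ConnectedSpace X] (hP : ∀ i, (S.P i).Nonempty)
    (x₀ : X) {l : Z2 m} (hl : l ∈ Lspan lam) (g : Z2 m) :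
    glueMk S lam x₀ (g + l) ∈ connectedComponent (glueMk S lam x₀ g) := by
  induction hl using Submodule.span_induction generalizing g with
  | mem l hl =>
    obtain ⟨i, rfl⟩ := hl
    exact panel_step S lam hP x₀ g i
  | zero => rw [add_zero]; exact mem_connectedComponent
  | add a b ha hb iha ihb =>
    have h1 := iha g
    have h2 := ihb (g + a)
    rw [connectedComponent_eq h1, ← add_assoc]
    exact h2
  | smul c a ha ih =>
    have hc : c = 0 ∨ c = 1 := by revert c; decide
    rcases hc with rfl | rfl
    · rw [zero_smul, add_zero]; exact mem_connectedComponent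
    · rw [one_smul]; exact ih g

private lemma component_eq_Amap [ConnectedSpace X] (hP : ∀ i, (S.P i).Nonempty)
    (x : X) (g : Z2 m) :
    connectedComponent (glueMk S lam x g) = Amap S lam g := by
  apply Set.Subset.antisymm
  · apply (isClopen_Amap S lam g).connectedComponent_subset
    rw [Amap_eq]
    exact ⟨(x, g), ⟨trivial, (mem_cosetSet lam).2 (by simpa using (Lspan lam).zero_mem)⟩, rfl⟩
  · rintro q hq
    rw [Amap_eq] at hq
    obtain ⟨⟨y, h⟩, ⟨-, hh⟩, rfl⟩ := hq
    obtain ⟨l, hl, rfl⟩ := hh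
    have h1 : glueMk S lam y (g + l) ∈ connectedComponent (glueMk S lam x (g + l)) :=
      mem_component_of_same_g S lam y x (g + l)
    have h2 : glueMk S lam x (g + l) ∈ connectedComponent (glueMk S lam x g) :=
      span_step S lam hP x hl g
    rw [connectedComponent_eq h2]
    exact h1

private lemma Z2_add_self (g : Z2 m) : g + g = 0 :=
  funext fun i => CharTwo.add_self_eq_zero _

private lemma continuous_glueAct (g : Z2 m) : Continuous (glueAct S lam g) := by
  rw [(isQuotientMap_theta S lam).continuous_iff]
  have : (glueAct S lam g) ∘ (Quotient.mk (glueSetoid S lam)) =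
      (Quotient.mk (glueSetoid S lam)) ∘ (fun p : X × Z2 m => (p.1, g + p.2)) := rfl
  rw [this]
  exact (continuous_theta S lam).comp
    (continuous_fst.prodMk ((continuous_of_discreteTopology).comp continuous_snd))

/-- The action by `g` as a homeomorphism (it is its own inverse in characteristic 2). -/
private def glueActHomeo (g : Z2 m) : GlueBack S lam ≃ₜ GlueBack S lam where
  toFun := glueAct S lam g
  invFun := glueAct S lam g
  left_inv p := by rw [← glueAct_add, Z2_add_self, glueAct_zero]
  right_inv p := by rw [← glueAct_add, Z2_add_self, glueAct_zero]
  continuous_toFun := continuous_glueAct S lam g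
  continuous_invFun := continuous_glueAct S lam g

private lemma glueAct_image_Amap (g g₀ : Z2 m) :
    glueAct S lam g '' Amap S lam g₀ = Amap S lam (g + g₀) := by
  rw [Amap_eq, Amap_eq]
  ext q
  constructor
  · rintro ⟨-, ⟨⟨y, h⟩, ⟨-, hh⟩, rfl⟩, rfl⟩
    obtain ⟨l, hl, rfl⟩ := hh
    refine ⟨(y, g + g₀ + l), ⟨trivial, ⟨l, hl, rfl⟩⟩, ?_⟩
    show glueMk S lam y (g + g₀ + l) = glueMk S lam y (g + (g₀ + l))
    rw [add_assoc]
  · rintro ⟨⟨y, h⟩, ⟨-, hh⟩, rfl⟩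
    obtain ⟨l, hl, rfl⟩ := hh
    refine ⟨glueMk S lam y (g₀ + l), ⟨(y, g₀ + l), ⟨trivial, ⟨l, hl, rfl⟩⟩, rfl⟩, ?_⟩
    show glueMk S lam y (g + (g₀ + l)) = glueMk S lam y (g + g₀ + l)
    rw [add_assoc]

end Aux

/-- If `X` is nonempty and connected and every panel is nonempty, then the
natural `(ℤ/2)^m`-action permutes the connected components of `M(X, λ)` transitively;
consequently all connected components are pairwise homeomorphic, and the connected
components are precisely the sets `θ_λ(X × (g + L_λ))` for `g ∈ (ℤ/2)^m`, where `L_λ` is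
the subgroup generated by the colors `λ(1), …, λ(k)`. -/
theorem glueBack_components (S : PanelStructure X k) [ConnectedSpace X]
    (hP : ∀ i, (S.P i).Nonempty) (lam : Fin k → Z2 m) :
    (∀ p q : GlueBack S lam, ∃ g : Z2 m,
        glueAct S lam g '' connectedComponent p = connectedComponent q) ∧
    (∀ p q : GlueBack S lam,
        Nonempty ((connectedComponent p : Set (GlueBack S lam)) ≃ₜ
          (connectedComponent q : Set (GlueBack S lam)))) ∧
    (∀ C : Set (GlueBack S lam),
        (∃ p : GlueBack S lam, C = connectedComponent p) ↔
        (∃ g : Z2 m, C = Quotient.mk (glueSetoid S lam) ''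
          (Set.univ ×ˢ ((g + ·) ''
            ((Submodule.span (ZMod 2) (Set.range lam) : Submodule (ZMod 2) (Z2 m)) :
              Set (Z2 m)))))) := by
  have key : ∀ p q : GlueBack S lam, ∃ g : Z2 m,
      glueAct S lam g '' connectedComponent p = connectedComponent q := by
    intro p q
    induction p using Quotient.ind with | _ a =>
    induction q using Quotient.ind with | _ b =>
    obtain ⟨x, ga⟩ := a
    obtain ⟨y, gb⟩ := b
    refine ⟨gb - ga, ?_⟩
    have h1 : (Quotient.mk (glueSetoid S lam) (x, ga) : GlueBack S lam) = glueMk S lam x ga := rfl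
    have h2 : (Quotient.mk (glueSetoid S lam) (y, gb) : GlueBack S lam) = glueMk S lam y gb := rfl
    rw [h1, h2, component_eq_Amap S lam hP x ga, component_eq_Amap S lam hP y gb,
      glueAct_image_Amap, sub_add_cancel]
  refine ⟨key, ?_, ?_⟩
  · intro p q
    obtain ⟨g, hg⟩ := key p q
    have himg : (glueActHomeo S lam g) '' connectedComponent p = connectedComponent q := hg
    exact ⟨((glueActHomeo S lam g).image (connectedComponent p)).trans
      (Homeomorph.setCongr himg)⟩
  · intro C
    constructor
    · rintro ⟨p, rfl⟩
      induction p using Quotient.ind with | _ a =>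
      obtain ⟨x, g⟩ := a
      exact ⟨g, component_eq_Amap S lam hP x g⟩
    · rintro ⟨g, rfl⟩
      have ⟨x⟩ : Nonempty X := inferInstance
      exact ⟨glueMk S lam x g, (component_eq_Amap S lam hP x g).symm⟩
end

section
/- Suppose X is nonempty and connected and every panel P_i is nonempty. Then every connected component C of M(X, λ) is invariant under the restriction of the natural action to the subgroup L_λ, and the orbit space C/L_λ of this restricted action is homeomorphic to X/≈. If moreover the involutive panel structure is perfect, then the L_λ-action on each connected component C is free. -/
open Set Relation

variable {X : Type*} [TopologicalSpace X] {k m : ℕ}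

/-- An involutive panel structure is *perfect* if every point lying on exactly `s`
panels has exactly `2^s` duplicate points. -/
def IsPerfect (S : PanelStructure X k) : Prop :=
  ∀ x : X,
    {y : X | ∃ ε : Fin k → Bool, (∀ i, ε i = true → x ∈ S.P i) ∧
        y = applyPanels S ε x}.ncard
      = 2 ^ ({i : Fin k | x ∈ S.P i}.ncard)

/-- The orbit equivalence relation of the restriction of the natural action to the
subgroup `L_λ` generated by the colors, on the connected component of `p`. -/
def compOrbitSetoid (S : PanelStructure X k) (lam : Fin k → Z2 m) (p : GlueBack S lam) :
    Setoid (connectedComponent p) where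
  r q q' := ∃ g ∈ Submodule.span (ZMod 2) (Set.range lam),
    glueAct S lam g (q : GlueBack S lam) = (q' : GlueBack S lam)
  iseqv := by
    refine ⟨fun q => ⟨0, Submodule.zero_mem _, glueAct_zero S lam _⟩, ?_, ?_⟩
    · rintro q q' ⟨g, hg, hq⟩
      refine ⟨g, hg, ?_⟩
      rw [← hq, ← glueAct_add]
      have h2 : g + g = 0 := by
        funext i
        exact (by decide : ∀ a : ZMod 2, a + a = 0) (g i)
      rw [h2, glueAct_zero]
    · rintro q q' q'' ⟨g, hg, hq⟩ ⟨g', hg', hq'⟩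
      exact ⟨g' + g, Submodule.add_mem _ hg' hg, by rw [glueAct_add, hq, hq']⟩

namespace GlueAux

lemma z2_add_self (g : Z2 m) : g + g = 0 := by
  funext i
  exact (by decide : ∀ a : ZMod 2, a + a = 0) (g i)

lemma z2_eq_of_add_eq_zero {g h : Z2 m} (e : g + h = 0) : g = h := by
  calc g = g + (h + h) := by rw [z2_add_self, add_zero]
    _ = (g + h) + h := (add_assoc ..).symm
    _ = h := by rw [e, zero_add]

def fa (S : PanelStructure X k) (ε : Fin k → Bool) (L : List (Fin k)) (x : X) : X :=
  L.foldl (fun y i => if ε i then S.τ i y else y) x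

lemma fa_nil (S : PanelStructure X k) (ε : Fin k → Bool) (x : X) : fa S ε [] x = x := rfl

lemma fa_cons (S : PanelStructure X k) (ε : Fin k → Bool) (i : Fin k) (L : List (Fin k))
    (x : X) : fa S ε (i :: L) x = fa S ε L (if ε i then S.τ i x else x) := rfl

lemma applyPanels_eq_fa (S : PanelStructure X k) (ε : Fin k → Bool) (x : X) :
    applyPanels S ε x = fa S ε (List.finRange k) x := rfl

lemma tau_mem {S : PanelStructure X k} {i j : Fin k} {x : X} (hi : x ∈ S.P i)
    (hj : x ∈ S.P j) : S.τ i x ∈ S.P j :=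
  (S.interMapsTo i j ⟨hi, hj⟩).2

lemma fa_mem {S : PanelStructure X k} {ε : Fin k → Bool} (L : List (Fin k)) (x : X)
    (hsup : ∀ i ∈ L, ε i = true → x ∈ S.P i) {j : Fin k} (hj : x ∈ S.P j) :
    fa S ε L x ∈ S.P j := by
  induction L generalizing x with
  | nil => exact hj
  | cons i L ih =>
    rw [fa_cons]
    by_cases hi : ε i = true
    · have hxi : x ∈ S.P i := hsup i (List.mem_cons_self ..) hi
      rw [if_pos hi]
      exact ih _ (fun l hl hel => tau_mem hxi (hsup l (List.mem_cons_of_mem _ hl) hel))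
        (tau_mem hxi hj)
    · rw [if_neg hi]
      exact ih x (fun l hl => hsup l (List.mem_cons_of_mem _ hl)) hj

lemma fa_comm {S : PanelStructure X k} {ε : Fin k → Bool} {j : Fin k} (L : List (Fin k))
    (x : X) (hsup : ∀ i ∈ L, ε i = true → x ∈ S.P i) (hj : x ∈ S.P j) :
    S.τ j (fa S ε L x) = fa S ε L (S.τ j x) := by
  induction L generalizing x with
  | nil => rfl
  | cons i L ih =>
    rw [fa_cons, fa_cons]
    by_cases hi : ε i = true
    · have hxi : x ∈ S.P i := hsup i (List.mem_cons_self ..) hi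
      rw [if_pos hi, if_pos hi]
      rw [ih (S.τ i x) (fun l hl hel => tau_mem hxi (hsup l (List.mem_cons_of_mem _ hl) hel))
        (tau_mem hxi hj)]
      rw [S.comm j i x ⟨hj, hxi⟩]
    · rw [if_neg hi, if_neg hi]
      exact ih x (fun l hl hel => hsup l (List.mem_cons_of_mem _ hl) hel) hj

lemma fa_of_false {S : PanelStructure X k} {ε : Fin k → Bool} (L : List (Fin k)) (x : X)
    (h : ∀ i ∈ L, ε i = false) : fa S ε L x = x := by
  induction L generalizing x with
  | nil => rfl
  | cons i L ih =>
    rw [fa_cons, if_neg (by simp [h i (List.mem_cons_self ..)]),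
      ih x (fun l hl => h l (List.mem_cons_of_mem _ hl))]

lemma fa_comp {S : PanelStructure X k} {ε ε' : Fin k → Bool} (L : List (Fin k)) (x : X)
    (hs : ∀ i ∈ L, ε i = true → x ∈ S.P i) (hs' : ∀ i ∈ L, ε' i = true → x ∈ S.P i) :
    fa S ε' L (fa S ε L x) = fa S (fun i => xor (ε i) (ε' i)) L x := by
  induction L generalizing x with
  | nil => rfl
  | cons i L ih =>
    have hs2 : ∀ l ∈ L, ε l = true → x ∈ S.P l := fun l hl => hs l (List.mem_cons_of_mem _ hl)
    have hs2' : ∀ l ∈ L, ε' l = true → x ∈ S.P l := fun l hl => hs' l (List.mem_cons_of_mem _ hl)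
    cases hεi : ε i <;> cases hε'i : ε' i
    · simp only [fa_cons, hεi, hε'i, Bool.false_eq_true, if_false, Bool.xor_false]
      exact ih x hs2 hs2'
    · have hxi : x ∈ S.P i := hs' i (List.mem_cons_self ..) hε'i
      simp only [fa_cons, hεi, hε'i, Bool.false_eq_true, if_false, if_true, Bool.false_xor]
      rw [fa_comm L x hs2 hxi]
      exact ih (S.τ i x) (fun l hl hel => tau_mem hxi (hs2 l hl hel))
        (fun l hl hel => tau_mem hxi (hs2' l hl hel))
    · have hxi : x ∈ S.P i := hs i (List.mem_cons_self ..) hεi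
      simp only [fa_cons, hεi, hε'i, Bool.false_eq_true, if_false, if_true, Bool.xor_false]
      exact ih (S.τ i x) (fun l hl hel => tau_mem hxi (hs2 l hl hel))
        (fun l hl hel => tau_mem hxi (hs2' l hl hel))
    · have hxi : x ∈ S.P i := hs i (List.mem_cons_self ..) hεi
      have htx : S.τ i x ∈ S.P i := S.mapsTo i hxi
      simp only [fa_cons, hεi, hε'i, if_true, Bool.xor_self, Bool.false_eq_true, if_false]
      rw [fa_comm L (S.τ i x) (fun l hl hel => tau_mem hxi (hs2 l hl hel)) htx,
        S.invol i x hxi]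
      exact ih x hs2 hs2'

lemma fa_single {S : PanelStructure X k} {j : Fin k} (L : List (Fin k)) (hn : L.Nodup)
    (hj : j ∈ L) (x : X) : fa S (fun i => decide (i = j)) L x = S.τ j x := by
  induction L generalizing x with
  | nil => simp at hj
  | cons i L ih =>
    rw [List.nodup_cons] at hn
    rw [fa_cons]
    by_cases hij : i = j
    · subst hij
      rw [if_pos (by simp)]
      exact fa_of_false L (S.τ i x) (fun l hl => by
        have : l ≠ i := fun e => hn.1 (e ▸ hl)
        simp [this])
    · rw [if_neg (by simp [hij])]
      have : j ∈ L := by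
        rcases List.mem_cons.mp hj with h | h
        · exact absurd h.symm hij
        · exact h
      exact ih hn.2 this x

lemma sum_single (lam : Fin k → Z2 m) (j : Fin k) :
    (∑ i, if (fun i => decide (i = j)) i then lam i else 0) = lam j := by
  classical
  rw [show (∑ i, if (fun i => decide (i = j)) i then lam i else 0)
      = ∑ i, if i = j then lam i else 0 from
    Finset.sum_congr rfl fun i _ => by by_cases h : i = j <;> simp [h]]
  simp [Finset.sum_ite_eq']

lemma sum_xor (lam : Fin k → Z2 m) (ε ε' : Fin k → Bool) :
    ((∑ i, if ε i then lam i else 0) + ∑ i, if ε' i then lam i else 0)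
      = ∑ i, if xor (ε i) (ε' i) then lam i else 0 := by
  rw [← Finset.sum_add_distrib]
  refine Finset.sum_congr rfl fun i _ => ?_
  cases h1 : ε i <;> cases h2 : ε' i <;> simp [z2_add_self]

lemma glue_inv (S : PanelStructure X k) (lam : Fin k → Z2 m) {a b : X × Z2 m}
    (h : EqvGen (glueRel S lam) a b) :
    ∃ ε : Fin k → Bool, (∀ i, ε i = true → a.1 ∈ S.P i) ∧
      b.1 = applyPanels S ε a.1 ∧
      b.2 = a.2 + ∑ i, (if ε i then lam i else 0) ∧
      ∀ j, (b.1 ∈ S.P j ↔ a.1 ∈ S.P j) := by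
  induction h with
  | rel a b hab =>
    obtain ⟨i, hx, hb1, hb2⟩ := hab
    refine ⟨fun l => decide (l = i), ?_, ?_, ?_, ?_⟩
    · intro l hl
      rw [decide_eq_true_eq] at hl
      subst hl; exact hx
    · rw [hb1, applyPanels_eq_fa,
        fa_single (List.finRange k) (List.nodup_finRange k) (List.mem_finRange i)]
    · rw [hb2, sum_single]
    · intro j
      rw [hb1]
      constructor
      · intro hj
        have := tau_mem (S.mapsTo i hx) hj
        rwa [S.invol i _ hx] at this
      · intro hj; exact tau_mem hx hj
  | refl a =>
    refine ⟨fun _ => false, fun i h => by simp at h, ?_, by simp, fun j => Iff.rfl⟩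
    rw [applyPanels_eq_fa, fa_of_false _ _ (fun i _ => rfl)]
  | symm a b _ ih =>
    obtain ⟨ε, hsup, hb1, hb2, hiff⟩ := ih
    refine ⟨ε, fun i hi => (hiff i).mpr (hsup i hi), ?_, ?_, fun j => (hiff j).symm⟩
    · rw [hb1, applyPanels_eq_fa, applyPanels_eq_fa,
        fa_comp (List.finRange k) a.1 (fun i _ hi => hsup i hi) (fun i _ hi => hsup i hi)]
      rw [show (fun i => xor (ε i) (ε i)) = fun _ => false from funext fun i => Bool.xor_self _]
      rw [fa_of_false _ _ (fun i _ => rfl)]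
    · rw [hb2, add_assoc, z2_add_self, add_zero]
  | trans a b c _ _ ih1 ih2 =>
    obtain ⟨ε, hsup1, hb1, hb2, hiff1⟩ := ih1
    obtain ⟨ε', hsup2, hc1, hc2, hiff2⟩ := ih2
    refine ⟨fun i => xor (ε i) (ε' i), ?_, ?_, ?_, fun j => (hiff2 j).trans (hiff1 j)⟩
    · intro i hi
      cases h1 : ε i
      · cases h2 : ε' i
        · simp [h1, h2] at hi
        · exact (hiff1 i).mp (hsup2 i h2)
      · exact hsup1 i h1
    · rw [hc1, hb1, applyPanels_eq_fa, applyPanels_eq_fa, applyPanels_eq_fa]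
      exact fa_comp (List.finRange k) a.1 (fun i _ hi => hsup1 i hi)
        (fun i _ hi => (hiff1 i).mp (hsup2 i hi))
    · rw [hc2, hb2, add_assoc, sum_xor]

lemma mem_span_add_iff {Lsub : Submodule (ZMod 2) (Z2 m)} {s t : Z2 m} (ht : t ∈ Lsub) :
    s + t ∈ Lsub ↔ s ∈ Lsub := by
  constructor
  · intro h
    have h2 : s + t + t ∈ Lsub := Lsub.add_mem h ht
    rwa [add_assoc, z2_add_self, add_zero] at h2
  · exact fun h => Lsub.add_mem h ht

lemma coset_wd (S : PanelStructure X k) (lam : Fin k → Z2 m) (h₀ : Z2 m) :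
    ∀ a b : X × Z2 m, EqvGen (glueRel S lam) a b →
      (a.2 + h₀ ∈ Submodule.span (ZMod 2) (Set.range lam)) =
      (b.2 + h₀ ∈ Submodule.span (ZMod 2) (Set.range lam)) := by
  intro a b hab
  induction hab with
  | rel a b h =>
    obtain ⟨i, _, _, h2⟩ := h
    apply propext
    rw [h2, add_right_comm]
    exact (mem_span_add_iff (Submodule.subset_span (Set.mem_range_self i))).symm
  | refl => rfl
  | symm _ _ _ ih => exact ih.symm
  | trans _ _ _ _ _ ih1 ih2 => exact ih1.trans ih2

def cosetProp (S : PanelStructure X k) (lam : Fin k → Z2 m) (h₀ : Z2 m) :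
    GlueBack S lam → Prop :=
  Quotient.lift (fun a : X × Z2 m => a.2 + h₀ ∈ Submodule.span (ZMod 2) (Set.range lam))
    (coset_wd S lam h₀)

lemma isClopen_coset (S : PanelStructure X k) (lam : Fin k → Z2 m) (h₀ : Z2 m) :
    IsClopen {q : GlueBack S lam | cosetProp S lam h₀ q} := by
  constructor
  · rw [← (isQuotientMap_quotient_mk' (s := glueSetoid S lam)).isClosed_preimage]
    exact IsClosed.preimage continuous_snd
      (isClosed_discrete {g : Z2 m | g + h₀ ∈ Submodule.span (ZMod 2) (Set.range lam)})
  · rw [← (isQuotientMap_quotient_mk' (s := glueSetoid S lam)).isOpen_preimage]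
    exact IsOpen.preimage continuous_snd
      (isOpen_discrete {g : Z2 m | g + h₀ ∈ Submodule.span (ZMod 2) (Set.range lam)})

lemma mem_span_of_mem_comp (S : PanelStructure X k) (lam : Fin k → Z2 m) {x₀ x : X}
    {h₀ h : Z2 m} (hc : glueMk S lam x h ∈ connectedComponent (glueMk S lam x₀ h₀)) :
    h + h₀ ∈ Submodule.span (ZMod 2) (Set.range lam) := by
  have hmem : cosetProp S lam h₀ (glueMk S lam x₀ h₀) := by
    show h₀ + h₀ ∈ _
    rw [z2_add_self]
    exact zero_mem _
  exact (isClopen_coset S lam h₀).connectedComponent_subset hmem hc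

lemma toPanel_wd (S : PanelStructure X k) (lam : Fin k → Z2 m) :
    ∀ a b : X × Z2 m, EqvGen (glueRel S lam) a b →
      (Quotient.mk (EqvGen.setoid (panelRel S)) a.1 : PanelQuot S) = Quotient.mk _ b.1 := by
  intro a b hab
  induction hab with
  | rel a b h =>
    obtain ⟨i, hx, he, _⟩ := h
    exact Quotient.sound (EqvGen.rel _ _ ⟨i, hx, he⟩)
  | refl => rfl
  | symm _ _ _ ih => exact ih.symm
  | trans _ _ _ _ _ ih1 ih2 => exact ih1.trans ih2

def toPanel (S : PanelStructure X k) (lam : Fin k → Z2 m) : GlueBack S lam → PanelQuot S :=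
  Quotient.lift (fun a : X × Z2 m => Quotient.mk (EqvGen.setoid (panelRel S)) a.1)
    (toPanel_wd S lam)

lemma toPanel_mk (S : PanelStructure X k) (lam : Fin k → Z2 m) (x : X) (h : Z2 m) :
    toPanel S lam (glueMk S lam x h) = Quotient.mk (EqvGen.setoid (panelRel S)) x := rfl

lemma toPanel_act (S : PanelStructure X k) (lam : Fin k → Z2 m) (g : Z2 m)
    (q : GlueBack S lam) : toPanel S lam (glueAct S lam g q) = toPanel S lam q := by
  exact Quotient.inductionOn q fun a => rfl

lemma continuous_toPanel (S : PanelStructure X k) (lam : Fin k → Z2 m) :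
    Continuous (toPanel S lam) := by
  exact Continuous.quotient_lift
    (f := fun a : X × Z2 m => Quotient.mk (EqvGen.setoid (panelRel S)) a.1)
    (Continuous.comp continuous_quotient_mk' continuous_fst) (toPanel_wd S lam)

lemma free_of_perfect (S : PanelStructure X k) (lam : Fin k → Z2 m) (hperf : IsPerfect S)
    {x : X} {h g : Z2 m} (heq : EqvGen (glueRel S lam) (x, g + h) (x, h)) : g = 0 := by
  classical
  obtain ⟨ε, hsup, hfix, hsum, _⟩ := glue_inv S lam heq
  simp only at hsup hfix hsum
  -- hfix : x = applyPanels S ε x ; hsum : h = (g + h) + Σ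
  set sg : Z2 m := ∑ i, (if ε i then lam i else 0) with hsg
  have hg : g = sg := by
    apply z2_eq_of_add_eq_zero
    have e2 : (g + sg) + h = 0 + h := by
      rw [zero_add, add_assoc, add_comm sg h, ← add_assoc, ← hsum]
    exact add_right_cancel e2
  -- now show ε is identically false using perfection
  have hεf : ε = fun _ => false := by
    set T := {ε : Fin k → Bool // ∀ i, ε i = true → x ∈ S.P i} with hT
    have eqv : T ≃ ({i : Fin k | x ∈ S.P i} → Bool) :=
      { toFun := fun ε i => ε.1 i.1
        invFun := fun η => ⟨fun i => if hi : x ∈ S.P i then η ⟨i, hi⟩ else false,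
          fun i hi => by
            by_contra hx
            simp only [dif_neg hx] at hi
            exact Bool.false_ne_true hi⟩
        left_inv := fun ε => Subtype.ext <| funext fun i => by
          by_cases hi : x ∈ S.P i
          · simp only [dif_pos hi]
          · simp only [dif_neg hi]
            cases hc : ε.1 i
            · rfl
            · exact absurd (ε.2 i hc) hi
        right_inv := fun η => funext fun i => by
          show (if hi : x ∈ S.P i.1 then η ⟨i.1, hi⟩ else false) = η i
          rw [dif_pos (show x ∈ S.P i.1 from i.2)] }
    have hcardT : Nat.card T = 2 ^ ({i : Fin k | x ∈ S.P i}.ncard) := by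
      rw [Nat.card_congr eqv, Nat.card_fun, Nat.card_coe_set_eq]
      norm_num
    set f : T → X := fun ε => applyPanels S ε.1 x with hf
    have hrange : Set.range f
        = {y : X | ∃ ε : Fin k → Bool, (∀ i, ε i = true → x ∈ S.P i) ∧
            y = applyPanels S ε x} := by
      ext y
      constructor
      · rintro ⟨⟨ε0, hε0⟩, rfl⟩
        exact ⟨ε0, hε0, rfl⟩
      · rintro ⟨ε0, hε0, rfl⟩
        exact ⟨⟨ε0, hε0⟩, rfl⟩
    have hcardR : Nat.card (Set.range f) = Nat.card T := by
      rw [hcardT, hrange, Nat.card_coe_set_eq]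
      exact hperf x
    have hinj : Function.Injective (Set.rangeFactorization f) := by
      have hbij := (Nat.bijective_iff_surjective_and_card (Set.rangeFactorization f)).mpr
        ⟨Set.rangeFactorization_surjective, hcardR.symm⟩
      exact hbij.injective
    have he : Set.rangeFactorization f ⟨ε, hsup⟩
        = Set.rangeFactorization f ⟨fun _ => false, fun i hi => by simp at hi⟩ := by
      apply Subtype.ext
      show f ⟨ε, hsup⟩ = f ⟨fun _ => false, _⟩
      show applyPanels S ε x = applyPanels S (fun _ => false) x
      rw [← hfix, applyPanels_eq_fa, fa_of_false _ _ (fun i _ => rfl)]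
    have := hinj he
    exact congrArg Subtype.val this
  rw [hg, hsg, hεf]
  simp

variable [ConnectedSpace X]

omit [ConnectedSpace X] in
lemma continuous_glueMk (S : PanelStructure X k) (lam : Fin k → Z2 m) (h : Z2 m) :
    Continuous (fun x => glueMk S lam x h) :=
  Continuous.comp continuous_quotient_mk' (continuous_id.prodMk continuous_const)

lemma comp_mk (S : PanelStructure X k) (lam : Fin k → Z2 m) (h : Z2 m) (x y : X) :
    glueMk S lam x h ∈ connectedComponent (glueMk S lam y h) := by
  have hc : IsPreconnected (Set.range fun z => glueMk S lam z h) :=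
    (isPreconnected_range (continuous_glueMk S lam h))
  exact hc.subset_connectedComponent ⟨y, rfl⟩ ⟨x, rfl⟩

lemma act_mem_comp (S : PanelStructure X k) (hP : ∀ i, (S.P i).Nonempty)
    (lam : Fin k → Z2 m) :
    ∀ g ∈ Submodule.span (ZMod 2) (Set.range lam), ∀ p : GlueBack S lam,
      glueAct S lam g p ∈ connectedComponent p := by
  intro g hg
  induction hg using Submodule.span_induction with
  | mem v hv =>
    obtain ⟨i, rfl⟩ := hv
    intro p
    obtain ⟨⟨x, h⟩, rfl⟩ := Quotient.exists_rep p
    obtain ⟨y, hy⟩ := hP i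
    have e1 : glueMk S lam y h = glueMk S lam (S.τ i y) (h + lam i) :=
      Quotient.sound (EqvGen.rel _ _ ⟨i, hy, rfl, rfl⟩)
    have h1 : glueMk S lam y h ∈ connectedComponent (glueMk S lam x h) :=
      comp_mk S lam h y x
    have h2 : glueMk S lam x (h + lam i)
        ∈ connectedComponent (glueMk S lam (S.τ i y) (h + lam i)) :=
      comp_mk S lam (h + lam i) x (S.τ i y)
    rw [← e1, ← connectedComponent_eq h1] at h2
    show glueMk S lam x (lam i + h) ∈ connectedComponent (glueMk S lam x h)
    rwa [add_comm]
  | zero => intro p; rw [glueAct_zero]; exact mem_connectedComponent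
  | add g g' _ _ ih ih' =>
    intro p
    rw [glueAct_add]
    rw [connectedComponent_eq (ih' p)]
    exact ih (glueAct S lam g' p)
  | smul c v hv ih =>
    intro p
    rcases (by decide : ∀ c : ZMod 2, c = 0 ∨ c = 1) c with rfl | rfl
    · rw [zero_smul, glueAct_zero]; exact mem_connectedComponent
    · rw [one_smul]; exact ih p

def fwd (S : PanelStructure X k) (lam : Fin k → Z2 m) (p : GlueBack S lam) :
    Quotient (compOrbitSetoid S lam p) → PanelQuot S :=
  Quotient.lift (fun q : connectedComponent p => toPanel S lam q.val) <| by
    rintro ⟨q, hq⟩ ⟨q', hq'⟩ ⟨g, hg, he⟩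
    have he' : glueAct S lam g q = q' := he
    show toPanel S lam q = toPanel S lam q'
    rw [← he', toPanel_act]

noncomputable def bwdFun (S : PanelStructure X k) (lam : Fin k → Z2 m) (p : GlueBack S lam)
    (x : X) : Quotient (compOrbitSetoid S lam p) :=
  Quotient.mk _ ⟨glueMk S lam x p.out.2, by
    have h1 : glueMk S lam x p.out.2
        ∈ connectedComponent (glueMk S lam p.out.1 p.out.2) :=
      comp_mk S lam p.out.2 x p.out.1
    have h2 : glueMk S lam p.out.1 p.out.2 = p := p.out_eq
    rwa [h2] at h1⟩

lemma bwd_wd (S : PanelStructure X k) (lam : Fin k → Z2 m) (p : GlueBack S lam) :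
    ∀ x y : X, EqvGen (panelRel S) x y → bwdFun S lam p x = bwdFun S lam p y := by
  intro x y hxy
  induction hxy with
  | rel x y hr =>
    obtain ⟨i, hx, rfl⟩ := hr
    apply Quotient.sound
    refine ⟨lam i, Submodule.subset_span (Set.mem_range_self i), ?_⟩
    show glueAct S lam (lam i) (glueMk S lam x p.out.2) = glueMk S lam (S.τ i x) p.out.2
    rw [glueAct_mk]
    calc glueMk S lam x (lam i + p.out.2)
        = glueMk S lam (S.τ i x) ((lam i + p.out.2) + lam i) :=
          Quotient.sound (EqvGen.rel _ _ ⟨i, hx, rfl, rfl⟩)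
      _ = glueMk S lam (S.τ i x) p.out.2 := by
          rw [add_right_comm, z2_add_self, zero_add]
  | refl => rfl
  | symm _ _ _ ih => exact ih.symm
  | trans _ _ _ _ _ ih1 ih2 => exact ih1.trans ih2

noncomputable def bwd (S : PanelStructure X k) (lam : Fin k → Z2 m) (p : GlueBack S lam) :
    PanelQuot S → Quotient (compOrbitSetoid S lam p) :=
  Quotient.lift (bwdFun S lam p) (bwd_wd S lam p)

lemma fwd_bwd (S : PanelStructure X k) (lam : Fin k → Z2 m) (p : GlueBack S lam)
    (d : PanelQuot S) : fwd S lam p (bwd S lam p d) = d :=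
  Quotient.inductionOn d fun x => rfl

lemma bwd_fwd (S : PanelStructure X k) (lam : Fin k → Z2 m) (p : GlueBack S lam)
    (c : Quotient (compOrbitSetoid S lam p)) : bwd S lam p (fwd S lam p c) = c := by
  refine Quotient.inductionOn c ?_
  rintro ⟨q, hq⟩
  obtain ⟨a, ha⟩ := Quotient.exists_rep q
  have hfwd : fwd S lam p (Quotient.mk _ ⟨q, hq⟩)
      = Quotient.mk (EqvGen.setoid (panelRel S)) a.1 := by
    show toPanel S lam q = _
    rw [← ha]
    rfl
  rw [hfwd]
  show bwdFun S lam p a.1 = Quotient.mk _ ⟨q, hq⟩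
  apply Quotient.sound
  have hcomp : glueMk S lam a.1 a.2 ∈ connectedComponent (glueMk S lam p.out.1 p.out.2) := by
    have h2 : glueMk S lam p.out.1 p.out.2 = p := p.out_eq
    rw [h2]
    have hq2 : (⟦a⟧ : GlueBack S lam) ∈ connectedComponent p := by rw [ha]; exact hq
    exact hq2
  refine ⟨a.2 + p.out.2, mem_span_of_mem_comp S lam hcomp, ?_⟩
  show glueAct S lam (a.2 + p.out.2) (glueMk S lam a.1 p.out.2) = q
  rw [glueAct_mk, add_assoc, z2_add_self, add_zero]
  exact ha

noncomputable def orbitHomeo (S : PanelStructure X k) (lam : Fin k → Z2 m)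
    (p : GlueBack S lam) : Quotient (compOrbitSetoid S lam p) ≃ₜ PanelQuot S where
  toFun := fwd S lam p
  invFun := bwd S lam p
  left_inv := bwd_fwd S lam p
  right_inv := fwd_bwd S lam p
  continuous_toFun := by
    exact Continuous.quotient_lift
      (Continuous.comp (continuous_toPanel S lam) continuous_subtype_val) _
  continuous_invFun := by
    refine Continuous.quotient_lift ?_ (bwd_wd S lam p)
    exact Continuous.comp continuous_quotient_mk'
      (Continuous.subtype_mk (continuous_glueMk S lam p.out.2) _)

end GlueAux

/-- If `X` is nonempty and connected and every panel is nonempty, then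
every connected component `C` of `M(X, λ)` is invariant under the subgroup `L_λ` generated
by the colors, the orbit space `C/L_λ` is homeomorphic to `X/≈`, and if moreover the panel
structure is perfect then the `L_λ`-action on each connected component is free. -/
theorem glueBack_component_orbitSpace (S : PanelStructure X k) [ConnectedSpace X]
    (hP : ∀ i, (S.P i).Nonempty) (lam : Fin k → Z2 m) :
    (∀ (p : GlueBack S lam), ∀ g ∈ Submodule.span (ZMod 2) (Set.range lam),
        ∀ q ∈ connectedComponent p, glueAct S lam g q ∈ connectedComponent p) ∧
    (∀ p : GlueBack S lam,
        Nonempty (Quotient (compOrbitSetoid S lam p) ≃ₜ PanelQuot S)) ∧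
    (IsPerfect S →
      ∀ (p : GlueBack S lam), ∀ g ∈ Submodule.span (ZMod 2) (Set.range lam),
        ∀ q ∈ connectedComponent p, glueAct S lam g q = q → g = 0) := by
  refine ⟨?_, ?_, ?_⟩
  · intro p g hg q hq
    rw [connectedComponent_eq hq]
    exact GlueAux.act_mem_comp S hP lam g hg q
  · intro p
    exact ⟨GlueAux.orbitHomeo S lam p⟩
  · intro hperf p g hg q hq hfix
    obtain ⟨⟨x, h⟩, rfl⟩ := Quotient.exists_rep q
    have heq : (Quotient.mk (glueSetoid S lam) (x, g + h) : GlueBack S lam)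
        = Quotient.mk (glueSetoid S lam) (x, h) := hfix
    exact GlueAux.free_of_perfect S lam hperf (Quotient.exact heq)
end

section
/- Let x ∈ X be a point such that τ_i(x) = x for every i ∈ I(x) (for instance, a point lying only in reflexive panels). Then for every g₀ ∈ (ℤ/2)^m the stabilizer of [(x, g₀)] under the natural (ℤ/2)^m-action on M(X, λ) is exactly the subgroup of (ℤ/2)^m generated by { λ(i) : i ∈ I(x) }. If moreover the vectors λ(i), i ∈ I(x), are linearly independent over 𝔽₂, then this stabilizer has order 2^{|I(x)|}. -/
open Set Relation

variable {X : Type*} [TopologicalSpace X] {k m : ℕ}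

/-- Let `x ∈ X` be a point fixed by `τᵢ` for every panel `Pᵢ` containing it
(for instance, a point lying only in reflexive panels).  Then for every `g₀` the stabilizer
of `[(x, g₀)]` under the natural `(ℤ/2)^m`-action on `M(X, λ)` is exactly the subgroup
generated by `{λ(i) : i ∈ I(x)}`; if moreover the vectors `λ(i)`, `i ∈ I(x)`, are linearly
independent over `𝔽₂`, this stabilizer has order `2^|I(x)|`. -/
theorem glueBack_stabilizer_of_reflexive (S : PanelStructure X k) (lam : Fin k → Z2 m)
    (x : X) (hx : ∀ i, x ∈ S.P i → S.τ i x = x) :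
    (∀ g₀ : Z2 m,
      {g : Z2 m | glueAct S lam g (glueMk S lam x g₀) = glueMk S lam x g₀} =
        ((Submodule.span (ZMod 2) (lam '' {i : Fin k | x ∈ S.P i}) :
          Submodule (ZMod 2) (Z2 m)) : Set (Z2 m))) ∧
    (LinearIndependent (ZMod 2) (fun i : {i : Fin k // x ∈ S.P i} => lam i) →
      ∀ g₀ : Z2 m,
        Nat.card {g : Z2 m | glueAct S lam g (glueMk S lam x g₀) = glueMk S lam x g₀} =
          2 ^ ({i : Fin k | x ∈ S.P i}.ncard)) := by
  classical
  set N : Submodule (ZMod 2) (Z2 m) :=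
    Submodule.span (ZMod 2) (lam '' {i : Fin k | x ∈ S.P i}) with hN
  have key : ∀ g₀ : Z2 m,
      {g : Z2 m | glueAct S lam g (glueMk S lam x g₀) = glueMk S lam x g₀} =
        (N : Set (Z2 m)) := by
    intro g₀
    ext g
    simp only [Set.mem_setOf_eq, SetLike.mem_coe, glueAct_mk]
    constructor
    · intro h
      have h' : EqvGen (glueRel S lam) (x, g + g₀) (x, g₀) := Quotient.exact h
      -- invariant predicate
      set A : X × Z2 m → Prop := fun p => p.1 = x → p.2 - g₀ ∈ N with hA
      have step : ∀ p q, glueRel S lam p q → (A p ↔ A q) := by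
        rintro p q ⟨i, hp, hq1, hq2⟩
        constructor
        · intro hAp hqx
          have hxPi : x ∈ S.P i := hqx ▸ hq1 ▸ S.mapsTo i hp
          have hpx : p.1 = x := by
            have : S.τ i (S.τ i p.1) = p.1 := S.invol i _ hp
            rw [← hq1, hqx, hx i hxPi] at this
            exact this.symm
          have hlam : lam i ∈ N := Submodule.subset_span ⟨i, hxPi, rfl⟩
          have : q.2 - g₀ = (p.2 - g₀) + lam i := by rw [hq2]; abel
          rw [this]
          exact N.add_mem (hAp hpx) hlam
        · intro hAq hpx
          have hxPi : x ∈ S.P i := hpx ▸ hp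
          have hqx : q.1 = x := by rw [hq1, hpx, hx i hxPi]
          have hlam : lam i ∈ N := Submodule.subset_span ⟨i, hxPi, rfl⟩
          have : p.2 - g₀ = (q.2 - g₀) - lam i := by rw [hq2]; abel
          rw [this]
          exact N.sub_mem (hAq hqx) hlam
      have inv : ∀ p q, EqvGen (glueRel S lam) p q → (A p ↔ A q) := by
        intro p q hpq
        induction hpq with
        | rel a b hab => exact step a b hab
        | refl a => exact Iff.rfl
        | symm a b _ ih => exact ih.symm
        | trans a b c _ _ ih₁ ih₂ => exact ih₁.trans ih₂
      have hA2 : A (x, g₀) := fun _ => by simp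
      have hA1 : A (x, g + g₀) := (inv _ _ h').mpr hA2
      have := hA1 rfl
      simpa using this
    · intro h
      refine Submodule.span_induction ?_ ?_ ?_ ?_ h
      · rintro v ⟨i, hi, rfl⟩
        have hrel : glueRel S lam (x, g₀) (x, g₀ + lam i) :=
          ⟨i, hi, (hx i hi).symm, rfl⟩
        have : glueMk S lam x g₀ = glueMk S lam x (g₀ + lam i) :=
          Quotient.sound (EqvGen.rel _ _ hrel)
        rw [add_comm (lam i) g₀]
        exact this.symm
      · rw [zero_add]
      · intro a b _ _ ha hb
        have : glueMk S lam x (a + b + g₀) = glueAct S lam a (glueMk S lam x (b + g₀)) := by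
          rw [glueAct_mk, add_assoc]
        rw [this, hb, glueAct_mk, ha]
      · intro c v _ hv
        have : c = 0 ∨ c = 1 := by revert c; decide
        rcases this with rfl | rfl
        · rw [zero_smul, zero_add]
        · rw [one_smul]; exact hv
  refine ⟨key, ?_⟩
  intro hli g₀
  rw [key g₀]
  have hNr : N = Submodule.span (ZMod 2)
      (Set.range fun i : {i : Fin k // x ∈ S.P i} => lam i) := by
    rw [hN, Set.image_eq_range]; rfl
  have b := Module.Basis.span hli
  have e1 : (N : Set (Z2 m)) ≃ ({i : Fin k // x ∈ S.P i} →₀ ZMod 2) := by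
    rw [hNr]; exact b.repr.toEquiv
  have : Nat.card (N : Set (Z2 m)) =
      Nat.card ({i : Fin k // x ∈ S.P i} → ZMod 2) := by
    rw [Nat.card_congr e1, Nat.card_congr (Finsupp.equivFunOnFinite)]
  rw [this, Nat.card_fun, Nat.card_zmod]
  congr 1
end

section
/- Let H be a subgroup of (ℤ/2)^m containing λ(i) for all i = 1, …, k, and let λ_H : {1, …, k} → H denote λ with codomain restricted to H. Then θ_λ(X × H) is a closed and open subset of M(X, λ), invariant under the natural action of H, and there is an H-equivariant homeomorphism from the glue-back construction M_H(X, λ_H) (the quotient of X × H by the relation generated by (x, g) ∼ (τ_i(x), g + λ(i)) for x ∈ P_i) onto θ_λ(X × H) with its subspace topology. -/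
open Set Relation

variable {X : Type*} [TopologicalSpace X] {k m : ℕ}

open Topology
/-- Restriction of a quotient map to the preimage of an open set is a quotient map. -/
theorem isQuotientMap_restrictPreimage_open {A B : Type*} [TopologicalSpace A]
    [TopologicalSpace B] {f : A → B} (hf : IsQuotientMap f) {U : Set B} (hU : IsOpen U) :
    IsQuotientMap (U.restrictPreimage f) := by
  rw [isQuotientMap_iff, and_comm, isCoinducing_iff]
  refine ⟨U.restrictPreimage_surjective hf.surjective, fun s => Iff.symm ?_⟩
  constructor
  · intro hs
    exact hs.preimage (Continuous.restrictPreimage hf.continuous)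
  · intro hs
    have hU' : IsOpen (f ⁻¹' U) := hU.preimage hf.continuous
    have h1 : IsOpen (Subtype.val '' ((U.restrictPreimage f) ⁻¹' s)) :=
      hU'.isOpenMap_subtype_val _ hs
    have h2 : f ⁻¹' (Subtype.val '' s) = Subtype.val '' ((U.restrictPreimage f) ⁻¹' s) := by
      ext a
      constructor
      · rintro ⟨b, hb, hba⟩
        have haU : a ∈ f ⁻¹' U := by
          simp only [Set.mem_preimage, ← hba]
          exact b.2
        exact ⟨⟨a, haU⟩, by exact
          (show (⟨f a, haU⟩ : U) ∈ s by rwa [show (⟨f a, haU⟩ : U) = b from Subtype.ext hba.symm]),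
          rfl⟩
      · rintro ⟨b, hb, rfl⟩
        exact ⟨U.restrictPreimage f b, hb, rfl⟩
    have h3 : IsOpen (Subtype.val '' s) := by
      rw [← hf.isOpen_preimage]
      rw [h2]
      exact h1
    have h4 : s = Subtype.val ⁻¹' (Subtype.val '' s) :=
      (Set.preimage_image_eq s Subtype.val_injective).symm
    rw [h4]
    exact h3.preimage continuous_subtype_val

/-- Key combinatorial lemma: the gluing equivalence with colors in `H` preserves membership
of the second coordinate in `H`, and when both endpoints lie in `X × H` the equivalence
descends to the `H`-valued gluing equivalence. -/
theorem glue_key (S : PanelStructure X k) (lam : Fin k → Z2 m)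
    (H : AddSubgroup (Z2 m)) (hH : ∀ i, lam i ∈ H) {p q : X × Z2 m}
    (h : EqvGen (glueRel S lam) p q) :
    (p.2 ∈ H ↔ q.2 ∈ H) ∧ ∀ (hp : p.2 ∈ H) (hq : q.2 ∈ H),
      EqvGen (glueRel S (fun i => (⟨lam i, hH i⟩ : H))) (p.1, ⟨p.2, hp⟩) (q.1, ⟨q.2, hq⟩) := by
  induction h with
  | rel a b hab =>
    obtain ⟨i, h1, h2, h3⟩ := hab
    constructor
    · constructor
      · intro hp; rw [h3]; exact H.add_mem hp (hH i)
      · intro hq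
        have : a.2 = b.2 - lam i := by rw [h3]; abel
        rw [this]; exact H.sub_mem hq (hH i)
    · intro hp hq
      exact EqvGen.rel _ _ ⟨i, h1, h2, Subtype.ext (by simpa using h3)⟩
  | refl a =>
    exact ⟨Iff.rfl, fun hp hq => EqvGen.refl _⟩
  | symm a b _ ih =>
    exact ⟨ih.1.symm, fun hp hq => EqvGen.symm _ _ (ih.2 hq hp)⟩
  | trans a b c _ _ ih1 ih2 =>
    refine ⟨ih1.1.trans ih2.1, fun hp hq => ?_⟩
    have hb : b.2 ∈ H := ih1.1.mp hp
    exact EqvGen.trans _ _ _ (ih1.2 hp hb) (ih2.2 hb hq)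

/-- The `H`-valued gluing equivalence maps into the full gluing equivalence. -/
theorem glue_up (S : PanelStructure X k) (lam : Fin k → Z2 m)
    (H : AddSubgroup (Z2 m)) (hH : ∀ i, lam i ∈ H) {a b : X × H}
    (h : EqvGen (glueRel S (fun i => (⟨lam i, hH i⟩ : H))) a b) :
    EqvGen (glueRel S lam) (a.1, (a.2 : Z2 m)) (b.1, (b.2 : Z2 m)) := by
  induction h with
  | rel a b hab =>
    obtain ⟨i, h1, h2, h3⟩ := hab
    exact EqvGen.rel _ _ ⟨i, h1, h2, by rw [h3]; rfl⟩
  | refl a => exact EqvGen.refl _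
  | symm a b _ ih => exact EqvGen.symm _ _ ih
  | trans a b c _ _ ih1 ih2 => exact EqvGen.trans _ _ _ ih1 ih2

/-- Let `H` be a subgroup of `(ℤ/2)^m` containing all the colors `λ(i)`,
and let `λ_H` be `λ` with codomain restricted to `H`.  Then `θ_λ(X × H)` is a closed and
open subset of `M(X, λ)`, invariant under the natural action of `H`, and there is an
`H`-equivariant homeomorphism from the glue-back construction `M_H(X, λ_H)` onto
`θ_λ(X × H)` with its subspace topology. -/
theorem glueBack_subgroup_piece (S : PanelStructure X k) (lam : Fin k → Z2 m)
    (H : AddSubgroup (Z2 m)) (hH : ∀ i, lam i ∈ H) :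
    IsClosed (Quotient.mk (glueSetoid S lam) '' (Set.univ ×ˢ (H : Set (Z2 m)))) ∧
    IsOpen (Quotient.mk (glueSetoid S lam) '' (Set.univ ×ˢ (H : Set (Z2 m)))) ∧
    (∀ g ∈ H, ∀ p ∈ Quotient.mk (glueSetoid S lam) '' (Set.univ ×ˢ (H : Set (Z2 m))),
        glueAct S lam g p ∈
          Quotient.mk (glueSetoid S lam) '' (Set.univ ×ˢ (H : Set (Z2 m)))) ∧
    ∃ f : GlueBack S (fun i => (⟨lam i, hH i⟩ : H)) ≃ₜ
        (Quotient.mk (glueSetoid S lam) '' (Set.univ ×ˢ (H : Set (Z2 m))) :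
          Set (GlueBack S lam)),
      ∀ (h : H) (q : GlueBack S (fun i => (⟨lam i, hH i⟩ : H))),
        ((f (glueAct S (fun i => (⟨lam i, hH i⟩ : H)) h q) : GlueBack S lam)) =
          glueAct S lam (h : Z2 m) ((f q : GlueBack S lam)) := by
  classical
  set lamH : Fin k → H := fun i => (⟨lam i, hH i⟩ : H) with hlamH
  set T : Set (GlueBack S lam) :=
    Quotient.mk (glueSetoid S lam) '' (Set.univ ×ˢ (H : Set (Z2 m))) with hT
  have hqm : IsQuotientMap (Quotient.mk (glueSetoid S lam)) := isQuotientMap_quot_mk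
  have hpre : Quotient.mk (glueSetoid S lam) ⁻¹' T = Set.univ ×ˢ (H : Set (Z2 m)) := by
    ext p
    constructor
    · rintro ⟨a, ⟨-, ha⟩, hmk⟩
      have h2 : EqvGen (glueRel S lam) a p := Quotient.exact hmk
      exact ⟨trivial, (glue_key S lam H hH h2).1.mp ha⟩
    · intro hp
      exact ⟨p, hp, rfl⟩
  have hopen : IsOpen T := by
    refine hqm.isOpen_preimage.mp ?_
    rw [hpre]
    exact isOpen_univ.prod (isOpen_discrete _)
  have hclosed : IsClosed T := by
    refine ((isQuotientMap_iff_isClosed.mp hqm).2 T).mpr ?_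
    rw [hpre]
    exact isClosed_univ.prod (isClosed_discrete _)
  have hinv : ∀ g ∈ H, ∀ p ∈ T, glueAct S lam g p ∈ T := by
    rintro g hg p ⟨⟨x, g₀⟩, ⟨-, hg₀⟩, rfl⟩
    exact ⟨(x, g + g₀), ⟨trivial, H.add_mem hg hg₀⟩, rfl⟩
  -- the forward map
  have Fsound : ∀ (a b : X × H), EqvGen (glueRel S lamH) a b →
      glueMk S lam a.1 (a.2 : Z2 m) = glueMk S lam b.1 (b.2 : Z2 m) :=
    fun a b hab => Quotient.sound (glue_up S lam H hH hab)
  set F : GlueBack S lamH → GlueBack S lam :=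
    Quotient.lift (fun p : X × H => glueMk S lam p.1 (p.2 : Z2 m)) Fsound with hF
  have hFmem : ∀ q, F q ∈ T := by
    intro q
    induction q using Quotient.ind with
    | _ a => exact ⟨(a.1, (a.2 : Z2 m)), ⟨trivial, a.2.2⟩, rfl⟩
  set f0 : GlueBack S lamH → T := fun q => ⟨F q, hFmem q⟩ with hf0
  have hFcont : Continuous F := by
    refine Continuous.quotient_lift ?_ _
    exact Continuous.comp continuous_quot_mk
      (continuous_fst.prodMk (continuous_subtype_val.comp continuous_snd))
  have hFinj : Function.Injective F := by
    intro q1 q2 h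
    revert h
    refine Quotient.inductionOn₂ q1 q2 fun a b h => ?_
    exact Quotient.sound ((glue_key S lam H hH (Quotient.exact h)).2 a.2.2 b.2.2)
  have hbij : Function.Bijective f0 := by
    constructor
    · intro a b h
      exact hFinj (congrArg Subtype.val h)
    · rintro ⟨t, ⟨x, g⟩, ⟨-, hg⟩, rfl⟩
      exact ⟨Quotient.mk (glueSetoid S lamH) (x, ⟨g, hg⟩), Subtype.ext rfl⟩
  set e : GlueBack S lamH ≃ T := Equiv.ofBijective f0 hbij with he
  have hqm' : IsQuotientMap (T.restrictPreimage (Quotient.mk (glueSetoid S lam))) :=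
    isQuotientMap_restrictPreimage_open hqm hopen
  set φ : ↥(Set.univ ×ˢ (H : Set (Z2 m))) ≃ₜ ↥(Quotient.mk (glueSetoid S lam) ⁻¹' T) :=
    Homeomorph.setCongr hpre.symm with hφ
  have hqm'' : IsQuotientMap ((T.restrictPreimage (Quotient.mk (glueSetoid S lam))) ∘ φ) :=
    hqm'.comp φ.isQuotientMap
  have hsymm_cont : Continuous (e.symm : T → GlueBack S lamH) := by
    rw [hqm''.continuous_iff]
    have heq : ((e.symm : T → GlueBack S lamH) ∘
        (T.restrictPreimage (Quotient.mk (glueSetoid S lam)) ∘ φ)) =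
        fun p : ↥(Set.univ ×ˢ (H : Set (Z2 m))) =>
          Quotient.mk (glueSetoid S lamH) (p.1.1, ⟨p.1.2, p.2.2⟩) := by
      funext p
      apply e.injective
      show e (e.symm _) = _
      rw [Equiv.apply_symm_apply]
      apply Subtype.ext
      rfl
    rw [heq]
    exact Continuous.comp continuous_quot_mk
      ((continuous_subtype_val.fst).prodMk
        (Continuous.subtype_mk continuous_subtype_val.snd _))
  set fh : GlueBack S lamH ≃ₜ T :=
    { e with
      continuous_toFun := hFcont.subtype_mk _
      continuous_invFun := hsymm_cont } with hfh
  refine ⟨hclosed, hopen, hinv, fh, ?_⟩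
  intro h q
  induction q using Quotient.ind with
  | _ a =>
    show F (Quotient.mk (glueSetoid S lamH) (a.1, h + a.2)) =
      glueAct S lam (h : Z2 m) (F (Quotient.mk (glueSetoid S lamH) a))
    rfl
end

section
/- Let X = [0,1]² ⊆ ℝ². Define P_1 = ({0} ∪ {1}) × [0,1] with τ_1(t, y) = (1 − t, 1 − y), and P_2 = [0,1] × ({0} ∪ {1}) with τ_2(x, t) = (1 − x, 1 − t). Then (P_1, τ_1), (P_2, τ_2) is an involutive panel structure on X in which both τ_1 and τ_2 are fixed-point free involutions; yet for the (ℤ/2)²-coloring λ with λ(1) = e_1 and λ(2) = e_2 (the standard basis vectors of (ℤ/2)²), the natural (ℤ/2)²-action on the glue-back construction M(X, λ) is not free: the stabilizer of the point [((0,0), 0)] contains the nonzero element e_1 + e_2. -/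
open Set Relation

variable {X : Type*} [TopologicalSpace X] {k m : ℕ}

/-- The unit square `[0,1]² ⊆ ℝ²`. -/
def unitSquare : Set (ℝ × ℝ) := Set.Icc (0, 0) (1, 1)

/-- The corner `(0,0)` of the unit square. -/
def squareCorner : unitSquare :=
  ⟨(0, 0), Set.left_mem_Icc.mpr (by norm_num [Prod.le_def])⟩

/-- The standard basis vectors of `(ℤ/2)²`. -/
def e1 : Z2 2 := Pi.single 0 1

def e2 : Z2 2 := Pi.single 1 1

/-- The coloring `λ(1) = e₁`, `λ(2) = e₂`. -/
def squareColoring : Fin 2 → Z2 2 := ![e1, e2]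

/-- The flip `(x,y) ↦ (1-x, 1-y)` on the unit square. -/
def sqFlip : ↥unitSquare → ↥unitSquare := fun p =>
  ⟨(1 - (p : ℝ × ℝ).1, 1 - (p : ℝ × ℝ).2), by
    have h := p.2
    simp only [unitSquare, Set.mem_Icc, Prod.le_def] at h ⊢
    obtain ⟨⟨h1, h2⟩, h3, h4⟩ := h
    exact ⟨⟨by linarith, by linarith⟩, by linarith, by linarith⟩⟩

theorem sqFlip_continuous : Continuous sqFlip := by
  apply Continuous.subtype_mk
  fun_prop

theorem sqFlip_flip (p : ↥unitSquare) : sqFlip (sqFlip p) = p := by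
  apply Subtype.ext
  simp [sqFlip, Prod.ext_iff]

def sqPanel : Fin 2 → Set (↥unitSquare) :=
  ![{p : ↥unitSquare | (p : ℝ × ℝ).1 = 0 ∨ (p : ℝ × ℝ).1 = 1},
    {p : ↥unitSquare | (p : ℝ × ℝ).2 = 0 ∨ (p : ℝ × ℝ).2 = 1}]

theorem sqPanel_mapsTo (i : Fin 2) : Set.MapsTo sqFlip (sqPanel i) (sqPanel i) := by
  fin_cases i <;> (rintro p (h | h) <;> simp [sqPanel, sqFlip, h])

def sqStructure : PanelStructure (↥unitSquare) 2 where
  P := sqPanel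
  isClosed i := by
    fin_cases i
    · exact ((isClosed_eq (continuous_fst.comp continuous_subtype_val) continuous_const).union
        (isClosed_eq (continuous_fst.comp continuous_subtype_val) continuous_const))
    · exact ((isClosed_eq (continuous_snd.comp continuous_subtype_val) continuous_const).union
        (isClosed_eq (continuous_snd.comp continuous_subtype_val) continuous_const))
  τ _ := sqFlip
  continuousOn _ := sqFlip_continuous.continuousOn
  mapsTo := sqPanel_mapsTo
  invol _ x _ := sqFlip_flip x
  interMapsTo i j := fun x hx => ⟨sqPanel_mapsTo i hx.1, sqPanel_mapsTo j hx.2⟩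
  comm _ _ _ _ := rfl

/-- On `X = [0,1]²` the two panels `P₁ = ({0} ∪ {1}) × [0,1]` with
`τ₁(t, y) = (1 − t, 1 − y)` and `τ₂(x, t) = (1 − x, 1 − t)` on `P₂ = [0,1] × ({0} ∪ {1})`
form an involutive panel structure in which both involutions are fixed-point free; yet for
the coloring `λ(1) = e₁`, `λ(2) = e₂` the natural `(ℤ/2)²`-action on the glue-back
construction `M(X, λ)` is not free: the stabilizer of `[((0,0), 0)]` contains the nonzero
element `e₁ + e₂`. -/
theorem squareExample_not_free :
    ∃ S : PanelStructure (↥unitSquare) 2,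
      S.P 0 = {p : ↥unitSquare | (p : ℝ × ℝ).1 = 0 ∨ (p : ℝ × ℝ).1 = 1} ∧
      S.P 1 = {p : ↥unitSquare | (p : ℝ × ℝ).2 = 0 ∨ (p : ℝ × ℝ).2 = 1} ∧
      (∀ p ∈ S.P 0, (S.τ 0 p : ℝ × ℝ) = (1 - (p : ℝ × ℝ).1, 1 - (p : ℝ × ℝ).2)) ∧
      (∀ p ∈ S.P 1, (S.τ 1 p : ℝ × ℝ) = (1 - (p : ℝ × ℝ).1, 1 - (p : ℝ × ℝ).2)) ∧
      (∀ p ∈ S.P 0, S.τ 0 p ≠ p) ∧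
      (∀ p ∈ S.P 1, S.τ 1 p ≠ p) ∧
      (e1 + e2 ≠ 0) ∧
      (glueAct S squareColoring (e1 + e2) (glueMk S squareColoring squareCorner 0) =
        glueMk S squareColoring squareCorner 0) ∧
      ¬ (∀ (g : Z2 2) (p : GlueBack S squareColoring),
          glueAct S squareColoring g p = p → g = 0) := by

  refine ⟨sqStructure, rfl, rfl, fun p _ => rfl, fun p _ => rfl, ?_, ?_, ?_, ?_, ?_⟩
  · rintro p (h | h) heq <;>
      · have := congrArg (fun q : ↥unitSquare => (q : ℝ × ℝ).1) heq
        simp [sqStructure, sqFlip, h] at this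
  · rintro p (h | h) heq <;>
      · have := congrArg (fun q : ↥unitSquare => (q : ℝ × ℝ).2) heq
        simp [sqStructure, sqFlip, h] at this
  · decide
  · rw [glueAct_mk]
    apply Quotient.sound
    have h1 : glueRel sqStructure squareColoring (squareCorner, (0 : Z2 2))
        (sqFlip squareCorner, 0 + e1) :=
      ⟨0, Or.inl rfl, rfl, by simp [squareColoring]⟩
    have h2 : glueRel sqStructure squareColoring (sqFlip squareCorner, 0 + e1)
        (squareCorner, (0 + e1) + e2) :=
      ⟨1, Or.inr (by norm_num [sqFlip, squareCorner]), (sqFlip_flip _).symm,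
        by simp [squareColoring]⟩
    have : EqvGen (glueRel sqStructure squareColoring) (squareCorner, (0 : Z2 2))
        (squareCorner, (0 + e1) + e2) :=
      EqvGen.trans _ _ _ (EqvGen.rel _ _ h1) (EqvGen.rel _ _ h2)
    have h3 : (0 + e1) + e2 = (e1 + e2) + (0 : Z2 2) := by abel
    rw [h3] at this
    exact (EqvGen.symm _ _ this)
  · intro hfree
    have h1 : e1 + e2 = 0 := hfree (e1 + e2) _ (by
      rw [glueAct_mk]
      apply Quotient.sound
      have h1 : glueRel sqStructure squareColoring (squareCorner, (0 : Z2 2))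
          (sqFlip squareCorner, 0 + e1) :=
        ⟨0, Or.inl rfl, rfl, by simp [squareColoring]⟩
      have h2 : glueRel sqStructure squareColoring (sqFlip squareCorner, 0 + e1)
          (squareCorner, (0 + e1) + e2) :=
        ⟨1, Or.inr (by norm_num [sqFlip, squareCorner]), (sqFlip_flip _).symm,
          by simp [squareColoring]⟩
      have : EqvGen (glueRel sqStructure squareColoring) (squareCorner, (0 : Z2 2))
          (squareCorner, (0 + e1) + e2) :=
        EqvGen.trans _ _ _ (EqvGen.rel _ _ h1) (EqvGen.rel _ _ h2)
      have h3 : (0 + e1) + e2 = (e1 + e2) + (0 : Z2 2) := by abel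
      rw [h3] at this
      exact (EqvGen.symm _ _ this))
    exact absurd h1 (by decide)
end
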